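/- arXiv:2505.01705 — 2 statements merged into one kernel-verified Lean document; each statement's English description precedes it below -/
import Mathlib

section
/- Let G(z) = z^{-1} + Σ_{n≥1} m_n z^{-n-1} and K(z) = z^{-1} + Σ_{n≥1} r_n z^{n-1} be formal Laurent series. Then the functional relation K(G(z)) = z holds (at the level of formal power series) if and only if for every n ≥ 1 the free moment-cumulant formula m_n = Σ_{π ∈ NC(n)} Π_{V ∈ π} r_{|V|} holds. -/
open Finset PowerSeries

/-- `P` is (the set of blocks of) a set partition of `{0, …, n-1}`. -/
def IsSetPartition (n : ℕ) (P : Finset (Finset (Fin n))) : Prop :=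
  (∀ B ∈ P, B.Nonempty) ∧ ∀ x : Fin n, ∃! B, B ∈ P ∧ x ∈ B

/-- `P` is non-crossing: there are no `a < b < c < d` with `a, c` in one block and
`b, d` in a different block. -/
def IsNonCrossing (n : ℕ) (P : Finset (Finset (Fin n))) : Prop :=
  ∀ a b c d : Fin n, a < b → b < c → c < d →
    ∀ B₁ ∈ P, ∀ B₂ ∈ P, a ∈ B₁ → c ∈ B₁ → b ∈ B₂ → d ∈ B₂ → B₁ = B₂

open scoped Classical in
/-- The set `NC(n)` of non-crossing partitions of `{1, …, n}`. -/
noncomputable def NC (n : ℕ) : Finset (Finset (Finset (Fin n))) :=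
  Finset.univ.filter fun P => IsSetPartition n P ∧ IsNonCrossing n P

/-- Composition (substitution) of formal power series, `f ∘ a`; the defining coefficient
formula is the correct one when `a` has zero constant term (the only case used below). -/
noncomputable def psComp (f a : PowerSeries ℝ) : PowerSeries ℝ :=
  PowerSeries.mk fun n => ∑ k ∈ Finset.range (n + 1), (coeff k f) * (coeff n (a ^ k))

/-- `M(w) = 1 + ∑_{n≥1} m_n wⁿ`, so that `G(z) = w·M(w)` with `w = 1/z` encodes the
formal Laurent series `G(z) = z⁻¹ + ∑_{n≥1} m_n z^{-n-1}`. -/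
noncomputable def Mser (m : ℕ → ℝ) : PowerSeries ℝ :=
  PowerSeries.mk fun k => if k = 0 then 1 else m k

/-- `R̂(y) = ∑_{n≥1} r_n yⁿ = y·R(y)`, encoding `K(z) = z⁻¹ + ∑_{n≥1} r_n z^{n-1}`. -/
noncomputable def Rser (r : ℕ → ℝ) : PowerSeries ℝ :=
  PowerSeries.mk fun k => if k = 0 then 0 else r k

lemma mem_NC {n : ℕ} {P : Finset (Finset (Fin n))} :
    P ∈ NC n ↔ IsSetPartition n P ∧ IsNonCrossing n P := by
  classical
  simp [NC]

lemma NC_zero : NC 0 = {(∅ : Finset (Finset (Fin 0)))} := by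
  ext P
  simp only [mem_NC, mem_singleton]
  constructor
  · rintro ⟨⟨h1, _⟩, _⟩
    ext B
    simp only [Finset.notMem_empty, iff_false]
    intro hB
    obtain ⟨x, hx⟩ := h1 B hB
    exact x.elim0
  · rintro rfl
    refine ⟨⟨by simp, fun x => x.elim0⟩, ?_⟩
    intro a; exact a.elim0

/-- weight with the block containing `0` shifted by `j`. -/
noncomputable def hw (r : ℕ → ℝ) (j : ℕ) {n : ℕ} (P : Finset (Finset (Fin n))) : ℝ :=
  ∏ B ∈ P, if ∃ hn : 0 < n, (⟨0, hn⟩ : Fin n) ∈ B then r (B.card + j) else r B.card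

/-- moment candidate: sum over noncrossing partitions. -/
noncomputable def cm (r : ℕ → ℝ) (n : ℕ) : ℝ := ∑ P ∈ NC n, ∏ B ∈ P, r B.card

noncomputable def hm (r : ℕ → ℝ) (j n : ℕ) : ℝ :=
  if n = 0 then r j else ∑ P ∈ NC n, hw r j P

lemma cm_zero (r : ℕ → ℝ) : cm r 0 = 1 := by simp [cm, NC_zero]

lemma hw_zero (r : ℕ → ℝ) {n : ℕ} (P : Finset (Finset (Fin n))) :
    hw r 0 P = ∏ B ∈ P, r B.card := by
  unfold hw
  refine Finset.prod_congr rfl fun B _ => ?_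
  split <;> simp

lemma cm_eq_hm (r : ℕ → ℝ) {n : ℕ} (hn : 1 ≤ n) : cm r n = hm r 0 n := by
  rw [hm, if_neg (by omega)]
  exact Finset.sum_congr rfl fun P _ => (hw_zero r P).symm


section Glue
/-- embedding of `Fin (s-1)` as `{1, …, s-1} ⊆ Fin n`. -/
def e1 (n s : ℕ) (h2 : s ≤ n) : Fin (s - 1) → Fin n :=
  fun x => ⟨x.val + 1, by have := x.isLt; omega⟩

/-- embedding of `Fin (n-s)` as `{s, …, n-1} ⊆ Fin n`. -/
def e2 (n s : ℕ) : Fin (n - s) → Fin n :=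
  fun x => ⟨x.val + s, by have := x.isLt; omega⟩

variable {n s : ℕ}

lemma e1_val (h2 : s ≤ n) (x : Fin (s-1)) : (e1 n s h2 x).val = x.val + 1 := rfl
lemma e2_val (x : Fin (n-s)) : (e2 n s x).val = x.val + s := rfl

lemma e1_strictMono (h2 : s ≤ n) : StrictMono (e1 n s h2) := by
  intro a b hab; rw [Fin.lt_def] at hab ⊢; simp only [e1_val]; omega

lemma e2_strictMono : StrictMono (e2 n s) := by
  intro a b hab; rw [Fin.lt_def] at hab ⊢; simp only [e2_val]; omega

lemma e1_inj (h2 : s ≤ n) : Function.Injective (e1 n s h2) := (e1_strictMono h2).injective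
lemma e2_inj : Function.Injective (e2 n s) := (e2_strictMono (n := n) (s := s)).injective

lemma e1_range (h2 : s ≤ n) (x : Fin (s-1)) :
    0 < (e1 n s h2 x).val ∧ (e1 n s h2 x).val < s := by
  have := x.isLt; rw [e1_val]; omega

lemma e2_range (x : Fin (n-s)) : s ≤ (e2 n s x).val := by
  rw [e2_val]; omega

lemma e1_cover (h2 : s ≤ n) (x : Fin n) (hx0 : 0 < x.val) (hxs : x.val < s) :
    ∃ y : Fin (s-1), e1 n s h2 y = x := by
  refine ⟨⟨x.val - 1, by omega⟩, ?_⟩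
  apply Fin.ext
  show (x.val - 1) + 1 = x.val
  omega

lemma e2_cover (x : Fin n) (hxs : s ≤ x.val) : ∃ y : Fin (n-s), e2 n s y = x := by
  have := x.isLt
  refine ⟨⟨x.val - s, by omega⟩, ?_⟩
  apply Fin.ext
  show (x.val - s) + s = x.val
  omega

/-- glue a partition of the gap `{1,…,s-1}` and a partition of `{s,…,n-1}` (with `0`
added to the block of `s`, which is the block of the minimum) into a partition of `Fin n`. -/
def glue (n s : ℕ) (h1 : 1 ≤ s) (h2 : s ≤ n)
    (P₁ : Finset (Finset (Fin (s - 1)))) (P₂ : Finset (Finset (Fin (n - s)))) :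
    Finset (Finset (Fin n)) :=
  P₁.image (Finset.image (e1 n s h2)) ∪
  (if s < n then
     P₂.image (fun B => if ∃ y ∈ B, y.val = 0 then
        insert (⟨0, by omega⟩ : Fin n) (B.image (e2 n s)) else B.image (e2 n s))
   else {{(⟨0, by omega⟩ : Fin n)}})
end Glue

section GlueNC
lemma val_eq_zero_of_eq_mk {n : ℕ} {x : Fin n} {h : 0 < n} (he : x = ⟨0, h⟩) : x.val = 0 := by
  rw [he]
variable {n s : ℕ}

lemma mem_image_e1_val {h2 : s ≤ n} {B : Finset (Fin (s-1))} {x : Fin n}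
    (hx : x ∈ B.image (e1 n s h2)) : 0 < x.val ∧ x.val < s := by
  obtain ⟨y, _, rfl⟩ := Finset.mem_image.1 hx
  exact e1_range h2 y

lemma mem_image_e2_val {B : Finset (Fin (n-s))} {x : Fin n}
    (hx : x ∈ B.image (e2 n s)) : s ≤ x.val := by
  obtain ⟨y, _, rfl⟩ := Finset.mem_image.1 hx
  exact e2_range y

lemma nc_image {m : ℕ} {f : Fin m → Fin n} (hf : StrictMono f) {P : Finset (Finset (Fin m))}
    (hnc : IsNonCrossing m P) {B B' : Finset (Fin m)} (hB : B ∈ P) (hB' : B' ∈ P)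
    {a b c d : Fin n} (hab : a < b) (hbc : b < c) (hcd : c < d)
    (ha : a ∈ B.image f) (hc : c ∈ B.image f) (hb : b ∈ B'.image f) (hd : d ∈ B'.image f) :
    B = B' := by
  obtain ⟨ya, hya, rfl⟩ := Finset.mem_image.1 ha
  obtain ⟨yc, hyc, rfl⟩ := Finset.mem_image.1 hc
  obtain ⟨yb, hyb, rfl⟩ := Finset.mem_image.1 hb
  obtain ⟨yd, hyd, rfl⟩ := Finset.mem_image.1 hd
  exact hnc ya yb yc yd (hf.lt_iff_lt.1 hab) (hf.lt_iff_lt.1 hbc) (hf.lt_iff_lt.1 hcd)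
    B hB B' hB' hya hyc hyb hyd

lemma nc_zero_case {m : ℕ} {P : Finset (Finset (Fin m))}
    (hnc : IsNonCrossing m P) {Bm B' : Finset (Fin m)} (hBm : Bm ∈ P) (hB' : B' ∈ P)
    {y0 : Fin m} (hy0 : y0 ∈ Bm) (h0 : y0.val = 0) {yb yc yd : Fin m}
    (hbc : yb < yc) (hcd : yc < yd) (hyb : yb ∈ B') (hyd : yd ∈ B') (hyc : yc ∈ Bm)
    (hb0 : yb.val ≠ 0) : Bm = B' := by
  have h1 : y0 < yb := by rw [Fin.lt_def]; omega
  exact hnc y0 yb yc yd h1 hbc hcd Bm hBm B' hB' hy0 hyc hyb hyd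

lemma glue_block_cases {h1 : 1 ≤ s} {h2 : s ≤ n}
    {P₁ : Finset (Finset (Fin (s-1)))} {P₂ : Finset (Finset (Fin (n-s)))}
    {C : Finset (Fin n)} (hC : C ∈ glue n s h1 h2 P₁ P₂) :
    (∃ B ∈ P₁, C = B.image (e1 n s h2)) ∨
    (s < n ∧ ∃ B ∈ P₂, ((∃ y ∈ B, y.val = 0) ∧
        C = insert (⟨0, by omega⟩ : Fin n) (B.image (e2 n s))) ∨
      (¬(∃ y ∈ B, y.val = 0) ∧ C = B.image (e2 n s))) ∨
    (s = n ∧ C = {(⟨0, by omega⟩ : Fin n)}) := by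
  rcases Finset.mem_union.1 hC with h | h
  · left
    obtain ⟨B, hB, rfl⟩ := Finset.mem_image.1 h
    exact ⟨B, hB, rfl⟩
  · by_cases hsn : s < n
    · rw [if_pos hsn] at h
      right; left
      obtain ⟨B, hB, rfl⟩ := Finset.mem_image.1 h
      refine ⟨hsn, B, hB, ?_⟩
      by_cases hy : ∃ y ∈ B, y.val = 0
      · left; exact ⟨hy, by rw [if_pos hy]⟩
      · right; exact ⟨hy, by rw [if_neg hy]⟩
    · rw [if_neg hsn] at h
      right; right
      exact ⟨by omega, Finset.mem_singleton.1 h⟩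

lemma glue_mem_NC (h1 : 1 ≤ s) (h2 : s ≤ n)
    {P₁ : Finset (Finset (Fin (s-1)))} {P₂ : Finset (Finset (Fin (n-s)))}
    (hP₁ : P₁ ∈ NC (s-1)) (hP₂ : P₂ ∈ NC (n-s)) :
    glue n s h1 h2 P₁ P₂ ∈ NC n := by
  obtain ⟨⟨hne₁, huq₁⟩, hnc₁⟩ := mem_NC.1 hP₁
  obtain ⟨⟨hne₂, huq₂⟩, hnc₂⟩ := mem_NC.1 hP₂
  have h0n : 0 < n := by omega
  rw [mem_NC]
  refine ⟨⟨?_, ?_⟩, ?_⟩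
  · -- blocks nonempty
    intro C hC
    rcases glue_block_cases hC with ⟨B, hB, rfl⟩ | ⟨hsn, B, hB, ⟨_, rfl⟩ | ⟨_, rfl⟩⟩ | ⟨_, rfl⟩
    · exact (hne₁ B hB).image _
    · exact Finset.insert_nonempty _ _
    · exact (hne₂ B hB).image _
    · exact Finset.singleton_nonempty _
  · -- unique block for each x
    intro x
    rcases Nat.eq_zero_or_pos x.val with hx0 | hxpos
    · -- x is the zero element
      by_cases hsn : s < n
      · have hpos : 0 < n - s := by omega
        obtain ⟨Bm, ⟨hBm, hyBm⟩, huBm⟩ := huq₂ ⟨0, hpos⟩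
        refine ⟨insert (⟨0, by omega⟩ : Fin n) (Bm.image (e2 n s)), ⟨?_, ?_⟩, ?_⟩
        · apply Finset.mem_union_right
          rw [if_pos hsn]
          refine Finset.mem_image.2 ⟨Bm, hBm, ?_⟩
          rw [if_pos ⟨⟨0, hpos⟩, hyBm, rfl⟩]
        · apply Finset.mem_insert.2; left; apply Fin.ext; exact hx0
        · rintro C ⟨hC, hxC⟩
          rcases glue_block_cases hC with ⟨B, hB, rfl⟩ | ⟨_, B, hB, ⟨⟨y0, hy0, hy00⟩, rfl⟩ | ⟨hno, rfl⟩⟩ | ⟨hsn', _⟩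
          · exact absurd (mem_image_e1_val hxC).1 (by omega)
          · have : B = Bm := huBm B ⟨hB, by
              have : y0 = (⟨0, hpos⟩ : Fin (n-s)) := Fin.ext hy00
              rwa [this] at hy0⟩
            rw [this]
          · exact absurd (mem_image_e2_val hxC) (by omega)
          · omega
      · have hsn' : s = n := by omega
        refine ⟨{(⟨0, by omega⟩ : Fin n)}, ⟨?_, ?_⟩, ?_⟩
        · apply Finset.mem_union_right
          rw [if_neg hsn]
          exact Finset.mem_singleton_self _
        · apply Finset.mem_singleton.2; apply Fin.ext; exact hx0
        · rintro C ⟨hC, hxC⟩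
          rcases glue_block_cases hC with ⟨B, hB, rfl⟩ | ⟨hsn2, _⟩ | ⟨_, rfl⟩
          · exact absurd (mem_image_e1_val hxC).1 (by omega)
          · omega
          · rfl
    · rcases Nat.lt_or_ge x.val s with hxs | hxs
      · -- x in the gap (0, s)
        obtain ⟨y, hy⟩ := e1_cover h2 x hxpos hxs
        obtain ⟨B, ⟨hB, hyB⟩, huB⟩ := huq₁ y
        refine ⟨B.image (e1 n s h2), ⟨Finset.mem_union_left _ (Finset.mem_image_of_mem _ hB), ?_⟩, ?_⟩
        · rw [← hy]; exact Finset.mem_image_of_mem _ hyB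
        · rintro C ⟨hC, hxC⟩
          rcases glue_block_cases hC with ⟨B', hB', rfl⟩ | ⟨_, B', hB', ⟨_, rfl⟩ | ⟨_, rfl⟩⟩ | ⟨_, rfl⟩
          · obtain ⟨y', hy', he⟩ := Finset.mem_image.1 hxC
            have : y' = y := e1_inj h2 (by rw [hy, he])
            rw [huB B' ⟨hB', by rwa [this] at hy'⟩]
          · rcases Finset.mem_insert.1 hxC with h | h
            · exact absurd (val_eq_zero_of_eq_mk h) (by omega)
            · exact absurd (mem_image_e2_val h) (by omega)
          · exact absurd (mem_image_e2_val hxC) (by omega)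
          · exact absurd (val_eq_zero_of_eq_mk (Finset.mem_singleton.1 hxC)) (by omega)
      · -- x ≥ s
        have hsn : s < n := lt_of_le_of_lt hxs x.isLt
        obtain ⟨y, hy⟩ := e2_cover x hxs
        obtain ⟨B, ⟨hB, hyB⟩, huB⟩ := huq₂ y
        refine ⟨if ∃ y ∈ B, y.val = 0 then
            insert (⟨0, by omega⟩ : Fin n) (B.image (e2 n s)) else B.image (e2 n s),
          ⟨?_, ?_⟩, ?_⟩
        · apply Finset.mem_union_right
          rw [if_pos hsn]
          exact Finset.mem_image_of_mem _ hB
        · have hx : x ∈ B.image (e2 n s) := by rw [← hy]; exact Finset.mem_image_of_mem _ hyB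
          split
          · exact Finset.mem_insert_of_mem hx
          · exact hx
        · rintro C ⟨hC, hxC⟩
          rcases glue_block_cases hC with ⟨B', hB', rfl⟩ | ⟨_, B', hB', ⟨hz, rfl⟩ | ⟨hz, rfl⟩⟩ | ⟨_, rfl⟩
          · exact absurd (mem_image_e1_val hxC).2 (by omega)
          · have hx : x ∈ B'.image (e2 n s) := by
              rcases Finset.mem_insert.1 hxC with h | h
              · exact absurd (val_eq_zero_of_eq_mk h) (by omega)
              · exact h
            obtain ⟨y', hy', he⟩ := Finset.mem_image.1 hx
            have : y' = y := e2_inj (by rw [hy, he])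
            rw [huB B' ⟨hB', by rwa [this] at hy'⟩, if_pos]
            rwa [huB B' ⟨hB', by rwa [this] at hy'⟩] at hz
          · obtain ⟨y', hy', he⟩ := Finset.mem_image.1 hxC
            have : y' = y := e2_inj (by rw [hy, he])
            rw [huB B' ⟨hB', by rwa [this] at hy'⟩, if_neg]
            rwa [huB B' ⟨hB', by rwa [this] at hy'⟩] at hz
          · exact absurd (val_eq_zero_of_eq_mk (Finset.mem_singleton.1 hxC)) (by omega)
  · -- noncrossing
    intro a b c d hab hbc hcd B₁ hB₁ B₂ hB₂ ha hc hb hd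
    rw [Fin.lt_def] at hab hbc hcd
    rcases glue_block_cases hB₂ with ⟨B₂', hB₂', rfl⟩ | ⟨hsn₂, B₂', hB₂', ⟨⟨y₂, hy₂, hy₂0⟩, rfl⟩ | ⟨hz₂, rfl⟩⟩ | ⟨_, rfl⟩
    · -- B₂ low
      rcases glue_block_cases hB₁ with ⟨B₁', hB₁', rfl⟩ | ⟨hsn₁, B₁', hB₁', ⟨⟨y₁, hy₁, hy₁0⟩, rfl⟩ | ⟨hz₁, rfl⟩⟩ | ⟨_, rfl⟩
      · -- low/low
        rw [nc_image (e1_strictMono h2) hnc₁ hB₁' hB₂'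
          (Fin.lt_def.2 hab) (Fin.lt_def.2 hbc) (Fin.lt_def.2 hcd) ha hc hb hd]
      · -- B₁ special, B₂ low: contradiction
        exfalso
        have hd' := (mem_image_e1_val hd).2
        have hb' := (mem_image_e1_val hb).1
        rcases Finset.mem_insert.1 ha with h | h
        · -- a = 0
          have ha0 : a.val = 0 := val_eq_zero_of_eq_mk h
          rcases Finset.mem_insert.1 hc with h' | h'
          · exact absurd (val_eq_zero_of_eq_mk h') (by omega)
          · have := mem_image_e2_val h'
            omega
        · have := mem_image_e2_val h
          omega
      · -- B₁ high, B₂ low: contradiction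
        exfalso
        have := mem_image_e2_val ha
        have := (mem_image_e1_val hd).2
        omega
      · -- B₁ = {0}, B₂ low
        exfalso
        have ha0 : a.val = 0 := val_eq_zero_of_eq_mk (Finset.mem_singleton.1 ha)
        have hc0 : c.val = 0 := val_eq_zero_of_eq_mk (Finset.mem_singleton.1 hc)
        omega
    · -- B₂ special
      rcases glue_block_cases hB₁ with ⟨B₁', hB₁', rfl⟩ | ⟨hsn₁, B₁', hB₁', ⟨⟨y₁, hy₁, hy₁0⟩, rfl⟩ | ⟨hz₁, rfl⟩⟩ | ⟨_, rfl⟩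
      · -- B₁ low, B₂ special : contradiction
        exfalso
        have hc' := (mem_image_e1_val hc).2
        rcases Finset.mem_insert.1 hb with h | h
        · exact absurd (val_eq_zero_of_eq_mk h) (by omega)
        · have := mem_image_e2_val h; omega
      · -- both special
        have : B₁' = B₂' := by
          apply (mem_NC.1 hP₂).1.2 y₁ |>.unique ⟨hB₁', hy₁⟩ ⟨hB₂', by
            have : y₂ = y₁ := Fin.ext (by omega)
            rwa [this] at hy₂⟩
        rw [this]
      · -- B₁ high, B₂ special
        have hb' : b ∈ B₂'.image (e2 n s) := by
          rcases Finset.mem_insert.1 hb with h | h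
          · exfalso
            have := mem_image_e2_val ha
            have := val_eq_zero_of_eq_mk h
            omega
          · exact h
        have hd' : d ∈ B₂'.image (e2 n s) := by
          rcases Finset.mem_insert.1 hd with h | h
          · exfalso
            have := mem_image_e2_val hc
            have := val_eq_zero_of_eq_mk h
            omega
          · exact h
        have : B₁' = B₂' := nc_image e2_strictMono hnc₂ hB₁' hB₂'
          (Fin.lt_def.2 hab) (Fin.lt_def.2 hbc) (Fin.lt_def.2 hcd) ha hc hb' hd'
        exfalso
        exact hz₁ ⟨y₂, by rw [this]; exact hy₂, hy₂0⟩
      · -- B₁ = {0}, B₂ special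
        exfalso
        have ha0 : a.val = 0 := val_eq_zero_of_eq_mk (Finset.mem_singleton.1 ha)
        have hc0 : c.val = 0 := val_eq_zero_of_eq_mk (Finset.mem_singleton.1 hc)
        omega
    · -- B₂ high
      rcases glue_block_cases hB₁ with ⟨B₁', hB₁', rfl⟩ | ⟨hsn₁, B₁', hB₁', ⟨⟨y₁, hy₁, hy₁0⟩, rfl⟩ | ⟨hz₁, rfl⟩⟩ | ⟨_, rfl⟩
      · -- B₁ low, B₂ high : contradiction
        exfalso
        have := (mem_image_e1_val hc).2
        have := mem_image_e2_val hb
        omega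
      · -- B₁ special, B₂ high
        have hc' : c ∈ B₁'.image (e2 n s) := by
          rcases Finset.mem_insert.1 hc with h | h
          · exfalso
            have := mem_image_e2_val hb
            have := val_eq_zero_of_eq_mk h
            omega
          · exact h
        obtain ⟨yb, hyb, hybe⟩ := Finset.mem_image.1 hb
        obtain ⟨yc, hyc, hyce⟩ := Finset.mem_image.1 hc'
        obtain ⟨yd, hyd, hyde⟩ := Finset.mem_image.1 hd
        exfalso
        have hbval : (e2 n s yb).val = b.val := by rw [hybe]
        have hcval : (e2 n s yc).val = c.val := by rw [hyce]
        have hdval : (e2 n s yd).val = d.val := by rw [hyde]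
        rw [e2_val] at hbval hcval hdval
        have hEq : B₁' = B₂' := nc_zero_case hnc₂ hB₁' hB₂' hy₁ hy₁0
          (show yb < yc by rw [Fin.lt_def]; omega)
          (show yc < yd by rw [Fin.lt_def]; omega) hyb hyd hyc
          (by intro h0; exact hz₂ ⟨yb, hyb, h0⟩)
        exact hz₂ ⟨y₁, by rw [← hEq]; exact hy₁, hy₁0⟩
      · -- both high
        rw [nc_image e2_strictMono hnc₂ hB₁' hB₂'
          (Fin.lt_def.2 hab) (Fin.lt_def.2 hbc) (Fin.lt_def.2 hcd) ha hc hb hd]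
      · -- B₁ = {0}, B₂ high
        exfalso
        have ha0 : a.val = 0 := val_eq_zero_of_eq_mk (Finset.mem_singleton.1 ha)
        have hc0 : c.val = 0 := val_eq_zero_of_eq_mk (Finset.mem_singleton.1 hc)
        omega
    · -- B₂ = {0}
      exfalso
      have hb0 : b.val = 0 := val_eq_zero_of_eq_mk (Finset.mem_singleton.1 hb)
      have hd0 : d.val = 0 := val_eq_zero_of_eq_mk (Finset.mem_singleton.1 hd)
      omega
end GlueNC

section GlueWeight
variable {n s : ℕ}

lemma hw_cond {m : ℕ} {C : Finset (Fin m)} :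
    (∃ hm : 0 < m, (⟨0, hm⟩ : Fin m) ∈ C) ↔ ∃ x ∈ C, x.val = 0 := by
  constructor
  · rintro ⟨hm, h⟩; exact ⟨_, h, rfl⟩
  · rintro ⟨x, hx, hx0⟩
    refine ⟨x.pos, ?_⟩
    have hx' : (⟨0, x.pos⟩ : Fin m) = x := Fin.ext (by simp [hx0])
    rwa [hx']

lemma z_not_mem_image_e2 (h1 : 1 ≤ s) {h0n : 0 < n} {B : Finset (Fin (n - s))} :
    (⟨0, h0n⟩ : Fin n) ∉ B.image (e2 n s) := by
  intro h
  have h' : s ≤ 0 := mem_image_e2_val h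
  omega

lemma tweak_erase (h1 : 1 ≤ s) (h0n : 0 < n) (D : Finset (Fin (n - s))) :
    ((if ∃ y ∈ D, y.val = 0 then
        insert (⟨0, h0n⟩ : Fin n) (D.image (e2 n s)) else D.image (e2 n s)).erase
      (⟨0, h0n⟩ : Fin n)) = D.image (e2 n s) := by
  by_cases hy : ∃ y ∈ D, y.val = 0
  · rw [if_pos hy, Finset.erase_insert (z_not_mem_image_e2 h1)]
  · rw [if_neg hy, Finset.erase_eq_of_notMem (z_not_mem_image_e2 h1)]

lemma glue_weight (r : ℕ → ℝ) (j : ℕ) (h1 : 1 ≤ s) (h2 : s ≤ n)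
    {P₁ : Finset (Finset (Fin (s-1)))} {P₂ : Finset (Finset (Fin (n-s)))}
    (hP₁ : P₁ ∈ NC (s-1)) (hP₂ : P₂ ∈ NC (n-s)) :
    hw r j (glue n s h1 h2 P₁ P₂) =
      (∏ B ∈ P₁, r B.card) * (if n - s = 0 then r (j+1) else hw r (j+1) P₂) := by
  have h0n : 0 < n := by omega
  obtain ⟨⟨hne₁, _⟩, _⟩ := mem_NC.1 hP₁
  obtain ⟨⟨hne₂, _⟩, _⟩ := mem_NC.1 hP₂
  have hdisj : Disjoint (P₁.image (Finset.image (e1 n s h2)))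
      (if s < n then
        P₂.image (fun B => if ∃ y ∈ B, y.val = 0 then
          insert (⟨0, by omega⟩ : Fin n) (B.image (e2 n s)) else B.image (e2 n s))
       else {{(⟨0, by omega⟩ : Fin n)}}) := by
    rw [Finset.disjoint_left]
    intro C hCA hCB
    obtain ⟨B, hB, rfl⟩ := Finset.mem_image.1 hCA
    by_cases hsn : s < n
    · rw [if_pos hsn] at hCB
      obtain ⟨B', hB', hBeq⟩ := Finset.mem_image.1 hCB
      by_cases hy : ∃ y ∈ B', y.val = 0
      · rw [if_pos hy] at hBeq
        have hz : (⟨0, by omega⟩ : Fin n) ∈ B.image (e1 n s h2) := by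
          rw [← hBeq]; exact Finset.mem_insert_self _ _
        have h0 : (0:ℕ) < 0 := (mem_image_e1_val hz).1
        omega
      · rw [if_neg hy] at hBeq
        obtain ⟨y', hy'⟩ := hne₂ B' hB'
        have hm : e2 n s y' ∈ B.image (e1 n s h2) := by
          rw [← hBeq]; exact Finset.mem_image_of_mem _ hy'
        have ha := (mem_image_e1_val hm).2
        have hb := e2_range (s := s) y'
        omega
    · rw [if_neg hsn] at hCB
      have hBeq := Finset.mem_singleton.1 hCB
      have hz : (⟨0, by omega⟩ : Fin n) ∈ B.image (e1 n s h2) := by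
        rw [hBeq]; exact Finset.mem_singleton_self _
      have h0 : (0:ℕ) < 0 := (mem_image_e1_val hz).1
      omega
  rw [hw, glue, Finset.prod_union hdisj]
  congr 1
  · -- low part
    rw [Finset.prod_image (fun x hx y hy h => Finset.image_injective (e1_inj h2) h)]
    refine Finset.prod_congr rfl fun B hB => ?_
    have hcond : ¬ ∃ hn : 0 < n, (⟨0, hn⟩ : Fin n) ∈ B.image (e1 n s h2) := by
      rw [hw_cond]
      rintro ⟨x, hx, hx0⟩
      have := (mem_image_e1_val hx).1
      omega
    rw [if_neg hcond, Finset.card_image_of_injective _ (e1_inj h2)]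
  · -- high part
    by_cases hsn : s < n
    · rw [if_pos hsn, if_neg (by omega)]
      rw [Finset.prod_image ?hinj]
      case hinj =>
        intro B hB B' hB' heq
        have := congrArg (fun (D : Finset (Fin n)) => D.erase (⟨0, h0n⟩ : Fin n)) heq
        simp only [tweak_erase h1 h0n] at this
        exact Finset.image_injective e2_inj this
      rw [hw]
      refine Finset.prod_congr rfl fun B hB => ?_
      by_cases hy : ∃ y ∈ B, y.val = 0
      · rw [if_pos hy]
        have hcond : ∃ hn : 0 < n, (⟨0, hn⟩ : Fin n) ∈
            insert (⟨0, h0n⟩ : Fin n) (B.image (e2 n s)) := ⟨h0n, Finset.mem_insert_self _ _⟩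
        rw [if_pos hcond, Finset.card_insert_of_notMem (z_not_mem_image_e2 h1),
          Finset.card_image_of_injective _ e2_inj]
        have hcond2 : ∃ hm : 0 < n - s, (⟨0, hm⟩ : Fin (n-s)) ∈ B := hw_cond.2 hy
        rw [if_pos hcond2]
        congr 1
        omega
      · rw [if_neg hy]
        have hcond : ¬ ∃ hn : 0 < n, (⟨0, hn⟩ : Fin n) ∈ B.image (e2 n s) := by
          rw [hw_cond]
          rintro ⟨x, hx, hx0⟩
          obtain ⟨y, hy', rfl⟩ := Finset.mem_image.1 hx
          rw [e2_val] at hx0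
          exact hy ⟨y, hy', by omega⟩
        have hcond2 : ¬ ∃ hm : 0 < n - s, (⟨0, hm⟩ : Fin (n-s)) ∈ B := by
          rw [hw_cond]; exact hy
        rw [if_neg hcond, if_neg hcond2, Finset.card_image_of_injective _ e2_inj]
    · rw [if_neg hsn, if_pos (by omega), Finset.prod_singleton]
      have hcond : ∃ hn : 0 < n, (⟨0, hn⟩ : Fin n) ∈ {(⟨0, by omega⟩ : Fin n)} :=
        ⟨h0n, Finset.mem_singleton_self _⟩
      rw [if_pos hcond, Finset.card_singleton]
      congr 1
      omega
end GlueWeight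

section GlueInj
variable {n s s' : ℕ}

lemma NC_eq_empty {m : ℕ} (hm : m = 0) {P : Finset (Finset (Fin m))} (hP : P ∈ NC m) :
    P = ∅ := by
  obtain ⟨⟨hne, _⟩, _⟩ := mem_NC.1 hP
  ext B
  simp only [Finset.notMem_empty, iff_false]
  intro hB
  obtain ⟨x, _⟩ := hne B hB
  exact absurd x.isLt (by omega)

lemma glue_special (h1 : 1 ≤ s) (h2 : s ≤ n)
    {P₁ : Finset (Finset (Fin (s-1)))} {P₂ : Finset (Finset (Fin (n-s)))}
    (hP₂ : P₂ ∈ NC (n-s)) :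
    ∃ C ∈ glue n s h1 h2 P₁ P₂, (⟨0, by omega⟩ : Fin n) ∈ C ∧
      ((s = n ∧ C = {(⟨0, by omega⟩ : Fin n)}) ∨
       (s < n ∧ (∃ x ∈ C, x.val = s) ∧ ∀ y ∈ C, y.val = 0 ∨ s ≤ y.val)) := by
  by_cases hsn : s < n
  · have hpos : 0 < n - s := by omega
    obtain ⟨⟨hne₂, huq₂⟩, _⟩ := mem_NC.1 hP₂
    obtain ⟨Bm, ⟨hBm, hyBm⟩, _⟩ := huq₂ ⟨0, hpos⟩
    refine ⟨insert (⟨0, by omega⟩ : Fin n) (Bm.image (e2 n s)), ?_, Finset.mem_insert_self _ _,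
      Or.inr ⟨hsn, ⟨e2 n s ⟨0, hpos⟩, Finset.mem_insert_of_mem (Finset.mem_image_of_mem _ hyBm),
        by rw [e2_val]; exact Nat.zero_add s⟩, ?_⟩⟩
    · apply Finset.mem_union_right
      rw [if_pos hsn]
      refine Finset.mem_image.2 ⟨Bm, hBm, ?_⟩
      rw [if_pos ⟨⟨0, hpos⟩, hyBm, rfl⟩]
    · intro y hy
      rcases Finset.mem_insert.1 hy with h | h
      · left; exact val_eq_zero_of_eq_mk h
      · right; exact mem_image_e2_val h
  · refine ⟨{(⟨0, by omega⟩ : Fin n)}, ?_, Finset.mem_singleton_self _,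
      Or.inl ⟨by omega, rfl⟩⟩
    apply Finset.mem_union_right
    rw [if_neg hsn]
    exact Finset.mem_singleton_self _

lemma glue_s_eq (h1 : 1 ≤ s) (h2 : s ≤ n) (h1' : 1 ≤ s') (h2' : s' ≤ n)
    {P₁ : Finset (Finset (Fin (s-1)))} {P₂ : Finset (Finset (Fin (n-s)))}
    {Q₁ : Finset (Finset (Fin (s'-1)))} {Q₂ : Finset (Finset (Fin (n-s')))}
    (hP₁ : P₁ ∈ NC (s-1)) (hP₂ : P₂ ∈ NC (n-s))
    (hQ₁ : Q₁ ∈ NC (s'-1)) (hQ₂ : Q₂ ∈ NC (n-s'))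
    (heq : glue n s h1 h2 P₁ P₂ = glue n s' h1' h2' Q₁ Q₂) : s = s' := by
  obtain ⟨C, hC, hzC, hCs⟩ := glue_special h1 h2 (P₁ := P₁) hP₂
  obtain ⟨C', hC', hzC', hCs'⟩ := glue_special h1' h2' (P₁ := Q₁) hQ₂
  rw [heq] at hC
  have hGNC := glue_mem_NC h1' h2' hQ₁ hQ₂
  obtain ⟨⟨_, huq⟩, _⟩ := mem_NC.1 hGNC
  have hCC' : C = C' := by
    obtain ⟨D, _, huD⟩ := huq (⟨0, by omega⟩ : Fin n)
    rw [huD C ⟨hC, hzC⟩, huD C' ⟨hC', hzC'⟩]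
  subst hCC'
  rcases hCs with ⟨hs, hC1⟩ | ⟨hsn, ⟨x, hx, hxs⟩, hall⟩ <;>
    rcases hCs' with ⟨hs', hC1'⟩ | ⟨hsn', ⟨x', hx', hxs'⟩, hall'⟩
  · omega
  · exfalso
    rw [hC1] at hx'
    have := val_eq_zero_of_eq_mk (Finset.mem_singleton.1 hx')
    omega
  · exfalso
    rw [hC1'] at hx
    have := val_eq_zero_of_eq_mk (Finset.mem_singleton.1 hx)
    omega
  · have hA := hall' x hx
    have hB := hall x' hx'
    omega

lemma glue_filter_low (h1 : 1 ≤ s) (h2 : s ≤ n)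
    {P₁ : Finset (Finset (Fin (s-1)))} {P₂ : Finset (Finset (Fin (n-s)))}
    (hP₂ : P₂ ∈ NC (n-s)) [DecidablePred fun C : Finset (Fin n) => ∀ x ∈ C, 0 < x.val ∧ x.val < s] :
    (glue n s h1 h2 P₁ P₂).filter (fun C => ∀ x ∈ C, 0 < x.val ∧ x.val < s) =
      P₁.image (Finset.image (e1 n s h2)) := by
  obtain ⟨⟨hne₂, _⟩, _⟩ := mem_NC.1 hP₂
  ext C
  simp only [Finset.mem_filter]
  constructor
  · rintro ⟨hC, hpred⟩
    rcases glue_block_cases hC with ⟨B, hB, rfl⟩ | ⟨hsn, B, hB, ⟨hy, rfl⟩ | ⟨hy, rfl⟩⟩ | ⟨_, rfl⟩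
    · exact Finset.mem_image_of_mem _ hB
    · exfalso
      exact absurd ((hpred _ (Finset.mem_insert_self _ _)).1) (lt_irrefl 0)
    · exfalso
      obtain ⟨y, hyB⟩ := hne₂ B hB
      have := (hpred _ (Finset.mem_image_of_mem _ hyB)).2
      have := e2_range (s := s) y
      omega
    · exfalso
      exact absurd ((hpred _ (Finset.mem_singleton_self _)).1) (lt_irrefl 0)
  · intro hC
    refine ⟨Finset.mem_union_left _ hC, ?_⟩
    obtain ⟨B, hB, rfl⟩ := Finset.mem_image.1 hC
    exact fun x hx => mem_image_e1_val hx

lemma glue_filter_high (h1 : 1 ≤ s) (h2 : s ≤ n)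
    {P₁ : Finset (Finset (Fin (s-1)))} {P₂ : Finset (Finset (Fin (n-s)))}
    (hP₁ : P₁ ∈ NC (s-1)) (hP₂ : P₂ ∈ NC (n-s))
    [DecidablePred fun C : Finset (Fin n) => ∀ x ∈ C, 0 < x.val ∧ x.val < s] :
    (glue n s h1 h2 P₁ P₂).filter (fun C => ¬ ∀ x ∈ C, 0 < x.val ∧ x.val < s) =
      (if s < n then
        P₂.image (fun B => if ∃ y ∈ B, y.val = 0 then
          insert (⟨0, by omega⟩ : Fin n) (B.image (e2 n s)) else B.image (e2 n s))
       else {{(⟨0, by omega⟩ : Fin n)}}) := by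
  obtain ⟨⟨hne₂, _⟩, _⟩ := mem_NC.1 hP₂
  ext C
  simp only [Finset.mem_filter]
  constructor
  · rintro ⟨hC, hpred⟩
    rcases Finset.mem_union.1 hC with h | h
    · exfalso
      apply hpred
      obtain ⟨B, hB, rfl⟩ := Finset.mem_image.1 h
      exact fun x hx => mem_image_e1_val hx
    · exact h
  · intro hC
    refine ⟨Finset.mem_union_right _ hC, ?_⟩
    intro hpred
    by_cases hsn : s < n
    · rw [if_pos hsn] at hC
      obtain ⟨B, hB, rfl⟩ := Finset.mem_image.1 hC
      by_cases hy : ∃ y ∈ B, y.val = 0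
      · rw [if_pos hy] at hpred
        exact absurd ((hpred _ (Finset.mem_insert_self _ _)).1) (lt_irrefl 0)
      · rw [if_neg hy] at hpred
        obtain ⟨y, hyB⟩ := hne₂ B hB
        have := (hpred _ (Finset.mem_image_of_mem _ hyB)).2
        have := e2_range (s := s) y
        omega
    · rw [if_neg hsn] at hC
      rw [Finset.mem_singleton.1 hC] at hpred
      exact absurd ((hpred _ (Finset.mem_singleton_self _)).1) (lt_irrefl 0)

lemma glue_comps_eq (h1 : 1 ≤ s) (h2 : s ≤ n) (h1' : 1 ≤ s) (h2' : s ≤ n)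
    {P₁ Q₁ : Finset (Finset (Fin (s-1)))} {P₂ Q₂ : Finset (Finset (Fin (n-s)))}
    (hP₁ : P₁ ∈ NC (s-1)) (hP₂ : P₂ ∈ NC (n-s))
    (hQ₁ : Q₁ ∈ NC (s-1)) (hQ₂ : Q₂ ∈ NC (n-s))
    (heq : glue n s h1 h2 P₁ P₂ = glue n s h1' h2' Q₁ Q₂) : P₁ = Q₁ ∧ P₂ = Q₂ := by
  classical
  have h0n : 0 < n := by omega
  have hlow := glue_filter_low h1 h2 (P₁ := P₁) hP₂
  have hlow' := glue_filter_low h1' h2' (P₁ := Q₁) hQ₂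
  have hhigh := glue_filter_high h1 h2 hP₁ hP₂
  have hhigh' := glue_filter_high h1' h2' hQ₁ hQ₂
  constructor
  · have : P₁.image (Finset.image (e1 n s h2)) = Q₁.image (Finset.image (e1 n s h2')) := by
      rw [← hlow, ← hlow', heq]
    have he : e1 n s h2' = e1 n s h2 := rfl
    rw [he] at this
    exact Finset.image_injective (Finset.image_injective (e1_inj h2)) this
  · by_cases hsn : s < n
    · have key : P₂.image (fun B => if ∃ y ∈ B, y.val = 0 then
          insert (⟨0, by omega⟩ : Fin n) (B.image (e2 n s)) else B.image (e2 n s)) =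
        Q₂.image (fun B => if ∃ y ∈ B, y.val = 0 then
          insert (⟨0, by omega⟩ : Fin n) (B.image (e2 n s)) else B.image (e2 n s)) := by
        have t1 := hhigh; rw [if_pos hsn] at t1
        have t2 := hhigh'; rw [if_pos hsn] at t2
        rw [← t1, ← t2, heq]
      have htweak : Function.Injective (fun B : Finset (Fin (n-s)) =>
          if ∃ y ∈ B, y.val = 0 then
            insert (⟨0, h0n⟩ : Fin n) (B.image (e2 n s)) else B.image (e2 n s)) := by
        intro B B' heq2
        have := congrArg (fun (D : Finset (Fin n)) => D.erase (⟨0, h0n⟩ : Fin n)) heq2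
        simp only [tweak_erase h1 h0n] at this
        exact Finset.image_injective e2_inj this
      exact Finset.image_injective htweak key
    · rw [NC_eq_empty (by omega) hP₂, NC_eq_empty (by omega) hQ₂]
end GlueInj

section GlueSurj

lemma glue_surj {n : ℕ} (hn : 1 ≤ n) {Q : Finset (Finset (Fin n))} (hQ : Q ∈ NC n) :
    ∃ (s : ℕ) (h1 : 1 ≤ s) (h2 : s ≤ n) (P₁ : Finset (Finset (Fin (s-1))))
      (P₂ : Finset (Finset (Fin (n-s)))),
      P₁ ∈ NC (s-1) ∧ P₂ ∈ NC (n-s) ∧ glue n s h1 h2 P₁ P₂ = Q := by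
  classical
  obtain ⟨⟨hne, huq⟩, hnc⟩ := mem_NC.1 hQ
  have h0n : 0 < n := hn
  set z : Fin n := ⟨0, h0n⟩ with hzdef
  obtain ⟨B₀, ⟨hB₀Q, hzB₀⟩, huB₀⟩ := huq z
  have hdisj : ∀ C ∈ Q, ∀ C' ∈ Q, ∀ x : Fin n, x ∈ C → x ∈ C' → C = C' := by
    intro C hC C' hC' x hxC hxC'
    obtain ⟨D, _, huD⟩ := huq x
    rw [huD C ⟨hC, hxC⟩, huD C' ⟨hC', hxC'⟩]
  have hz_iff : ∀ x : Fin n, x.val = 0 ↔ x = z := by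
    intro x
    constructor
    · intro h; exact Fin.ext h
    · intro h; rw [h]
  have hz_only : ∀ C ∈ Q, z ∈ C → C = B₀ := fun C hC hzC => hdisj C hC B₀ hB₀Q z hzC hzB₀
  -- define s
  set s : ℕ := if h : (B₀.erase z).Nonempty then ((B₀.erase z).min' h).val else n with hsdef
  have hs2 : s ≤ n := by
    rw [hsdef]; split
    · exact le_of_lt (Fin.isLt _)
    · exact le_refl n
  have hs1 : 1 ≤ s := by
    rw [hsdef]; split
    · rename_i h
      have hm := Finset.min'_mem _ h
      have := (Finset.mem_erase.1 hm).1
      have : ((B₀.erase z).min' h).val ≠ 0 := fun h0 => this ((hz_iff _).1 h0)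
      omega
    · omega
  have factA : ∀ x ∈ B₀, x ≠ z → s ≤ x.val := by
    intro x hx hxz
    rw [hsdef]
    have hmem : x ∈ B₀.erase z := Finset.mem_erase.2 ⟨hxz, hx⟩
    rw [dif_pos ⟨x, hmem⟩]
    exact Finset.min'_le _ _ hmem
  have factB : ∀ hsn : s < n, (⟨s, hsn⟩ : Fin n) ∈ B₀ := by
    intro hsn
    by_cases h : (B₀.erase z).Nonempty
    · have hm := Finset.min'_mem _ h
      have : (⟨s, hsn⟩ : Fin n) = (B₀.erase z).min' h := by
        apply Fin.ext
        show s = _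
        rw [hsdef, dif_pos h]
      rw [this]
      exact Finset.mem_of_mem_erase hm
    · exfalso
      rw [hsdef, dif_neg h] at hsn
      omega
  have factC : ¬ s < n → B₀ = {z} := by
    intro hsn
    by_cases h : (B₀.erase z).Nonempty
    · exfalso
      rw [hsdef, dif_pos h] at hsn
      exact hsn (Fin.isLt _)
    · rw [Finset.not_nonempty_iff_eq_empty] at h
      apply Finset.eq_singleton_iff_unique_mem.2
      refine ⟨hzB₀, fun x hx => ?_⟩
      by_contra hxz
      have : x ∈ B₀.erase z := Finset.mem_erase.2 ⟨hxz, hx⟩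
      rw [h] at this
      exact absurd this (Finset.notMem_empty x)
  have fact_nostraddle : ∀ C ∈ Q, C ≠ B₀ → (∀ x ∈ C, x.val < s) ∨ (∀ x ∈ C, s ≤ x.val) := by
    intro C hC hCB₀
    by_cases hex : ∃ x ∈ C, s ≤ x.val
    · right
      intro y hyC
      by_contra hys
      rw [not_le] at hys
      obtain ⟨x, hxC, hxs⟩ := hex
      have hsn : s < n := lt_of_le_of_lt hxs x.isLt
      have hsfin := factB hsn
      have hyz : y ≠ z := fun h => hCB₀ (hz_only C hC (h ▸ hyC))
      have hy0 : 0 < y.val := by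
        rcases Nat.eq_zero_or_pos y.val with h0 | h0
        · exact absurd ((hz_iff y).1 h0) hyz
        · exact h0
      have hxne : x ≠ (⟨s, hsn⟩ : Fin n) := by
        intro h
        exact hCB₀ (hdisj C hC B₀ hB₀Q x hxC (h ▸ hsfin))
      have hxs' : s < x.val := by
        rcases lt_or_eq_of_le hxs with h | h
        · exact h
        · exact absurd (Fin.ext h.symm) hxne
      exact hCB₀ ((hnc z y ⟨s, hsn⟩ x
        (by rw [Fin.lt_def]; exact hy0) (by rw [Fin.lt_def]; exact hys)
        (by rw [Fin.lt_def]; exact hxs')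
        B₀ hB₀Q C hC hzB₀ hsfin hyC hxC).symm)
    · left
      intro x hx
      by_contra h
      exact hex ⟨x, hx, by omega⟩
  have hB₀_elts : ∀ x ∈ B₀, x = z ∨ s ≤ x.val := by
    intro x hx
    by_cases hxz : x = z
    · exact Or.inl hxz
    · exact Or.inr (factA x hx hxz)
  -- the two pieces
  set P₁ : Finset (Finset (Fin (s-1))) :=
    (Q.filter (fun C => ∀ x ∈ C, 0 < x.val ∧ x.val < s)).image
      (fun C => C.preimage (e1 n s hs2) (e1_inj hs2).injOn) with hP₁def
  set P₂ : Finset (Finset (Fin (n-s))) :=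
    (Q.filter (fun C => ∃ x ∈ C, s ≤ x.val)).image
      (fun C => (C.erase z).preimage (e2 n s) e2_inj.injOn) with hP₂def
  -- characterize low/high blocks
  have hlow_block : ∀ (y : Fin (s-1)), ∃ C ∈ Q, (e1 n s hs2 y ∈ C) ∧
      (∀ x ∈ C, 0 < x.val ∧ x.val < s) := by
    intro y
    obtain ⟨C, ⟨hC, hyC⟩, _⟩ := huq (e1 n s hs2 y)
    have hrange := e1_range hs2 y
    have hCne : C ≠ B₀ := by
      intro h
      rcases hB₀_elts _ (h ▸ hyC) with h' | h'
      · have := congrArg Fin.val h'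
        rw [e1_val] at this
        simp at this
      · rw [e1_val] at h'
        omega
    have hall : ∀ x ∈ C, 0 < x.val ∧ x.val < s := by
      intro x hx
      have hxz : x ≠ z := fun h => hCne (hz_only C hC (h ▸ hx))
      have h0 : 0 < x.val := by
        rcases Nat.eq_zero_or_pos x.val with h0 | h0
        · exact absurd ((hz_iff x).1 h0) hxz
        · exact h0
      rcases fact_nostraddle C hC hCne with h' | h'
      · exact ⟨h0, h' x hx⟩
      · exfalso
        have := h' _ hyC
        rw [e1_val] at this
        omega
    exact ⟨C, hC, hyC, hall⟩
  have hhigh_block : ∀ (y : Fin (n-s)), ∃ C ∈ Q, (e2 n s y ∈ C) ∧ (∃ x ∈ C, s ≤ x.val) ∧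
      (∀ x ∈ C, x ≠ z → s ≤ x.val) := by
    intro y
    obtain ⟨C, ⟨hC, hyC⟩, _⟩ := huq (e2 n s y)
    have hrange := e2_range (s := s) y
    refine ⟨C, hC, hyC, ⟨_, hyC, hrange⟩, ?_⟩
    intro x hx hxz
    by_cases hCB₀ : C = B₀
    · exact factA x (hCB₀ ▸ hx) hxz
    · rcases fact_nostraddle C hC hCB₀ with h' | h'
      · exfalso
        have := h' _ hyC
        omega
      · exact h' x hx
  -- P₁ ∈ NC (s-1)
  have hP₁NC : P₁ ∈ NC (s-1) := by
    rw [mem_NC]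
    refine ⟨⟨?_, ?_⟩, ?_⟩
    · rintro D hD
      obtain ⟨C, hCf, rfl⟩ := Finset.mem_image.1 hD
      rw [Finset.mem_filter] at hCf
      obtain ⟨x, hx⟩ := hne C hCf.1
      obtain ⟨hx0, hxs⟩ := hCf.2 x hx
      obtain ⟨y, hy⟩ := e1_cover hs2 x hx0 hxs
      exact ⟨y, Finset.mem_preimage.2 (by rw [hy]; exact hx)⟩
    · intro y
      obtain ⟨C, hC, hyC, hall⟩ := hlow_block y
      refine ⟨C.preimage (e1 n s hs2) (e1_inj hs2).injOn,
        ⟨Finset.mem_image_of_mem _ (Finset.mem_filter.2 ⟨hC, hall⟩),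
          Finset.mem_preimage.2 hyC⟩, ?_⟩
      rintro D ⟨hD, hyD⟩
      obtain ⟨C', hC'f, rfl⟩ := Finset.mem_image.1 hD
      rw [Finset.mem_filter] at hC'f
      have : C' = C := hdisj C' hC'f.1 C hC _ (Finset.mem_preimage.1 hyD) hyC
      subst this
      rfl
    · intro a b c d hab hbc hcd D₁ hD₁ D₂ hD₂ ha hc hb hd
      obtain ⟨C₁, hC₁f, rfl⟩ := Finset.mem_image.1 hD₁
      obtain ⟨C₂, hC₂f, rfl⟩ := Finset.mem_image.1 hD₂
      rw [Finset.mem_filter] at hC₁f hC₂f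
      have : C₁ = C₂ := hnc _ _ _ _ ((e1_strictMono hs2).lt_iff_lt.2 hab)
        ((e1_strictMono hs2).lt_iff_lt.2 hbc) ((e1_strictMono hs2).lt_iff_lt.2 hcd)
        C₁ hC₁f.1 C₂ hC₂f.1 (Finset.mem_preimage.1 ha) (Finset.mem_preimage.1 hc)
        (Finset.mem_preimage.1 hb) (Finset.mem_preimage.1 hd)
      subst this
      rfl
  -- P₂ ∈ NC (n-s)
  have hP₂NC : P₂ ∈ NC (n-s) := by
    rw [mem_NC]
    refine ⟨⟨?_, ?_⟩, ?_⟩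
    · rintro D hD
      obtain ⟨C, hCf, rfl⟩ := Finset.mem_image.1 hD
      rw [Finset.mem_filter] at hCf
      obtain ⟨x, hx, hxs⟩ := hCf.2
      obtain ⟨y, hy⟩ := e2_cover x hxs
      refine ⟨y, Finset.mem_preimage.2 (Finset.mem_erase.2 ⟨?_, by rw [hy]; exact hx⟩)⟩
      rw [hy]
      intro h
      have := val_eq_zero_of_eq_mk h
      omega
    · intro y
      obtain ⟨C, hC, hyC, hhas, hall⟩ := hhigh_block y
      have hyz : e2 n s y ≠ z := by
        intro h
        have := val_eq_zero_of_eq_mk h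
        rw [e2_val] at this
        omega
      refine ⟨(C.erase z).preimage (e2 n s) e2_inj.injOn,
        ⟨Finset.mem_image_of_mem _ (Finset.mem_filter.2 ⟨hC, hhas⟩),
          Finset.mem_preimage.2 (Finset.mem_erase.2 ⟨hyz, hyC⟩)⟩, ?_⟩
      rintro D ⟨hD, hyD⟩
      obtain ⟨C', hC'f, rfl⟩ := Finset.mem_image.1 hD
      rw [Finset.mem_filter] at hC'f
      have hyC' := Finset.mem_of_mem_erase (Finset.mem_preimage.1 hyD)
      have : C' = C := hdisj C' hC'f.1 C hC _ hyC' hyC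
      subst this
      rfl
    · intro a b c d hab hbc hcd D₁ hD₁ D₂ hD₂ ha hc hb hd
      obtain ⟨C₁, hC₁f, rfl⟩ := Finset.mem_image.1 hD₁
      obtain ⟨C₂, hC₂f, rfl⟩ := Finset.mem_image.1 hD₂
      rw [Finset.mem_filter] at hC₁f hC₂f
      have : C₁ = C₂ := hnc _ _ _ _ (e2_strictMono.lt_iff_lt.2 hab)
        (e2_strictMono.lt_iff_lt.2 hbc) (e2_strictMono.lt_iff_lt.2 hcd)
        C₁ hC₁f.1 C₂ hC₂f.1
        (Finset.mem_of_mem_erase (Finset.mem_preimage.1 ha))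
        (Finset.mem_of_mem_erase (Finset.mem_preimage.1 hc))
        (Finset.mem_of_mem_erase (Finset.mem_preimage.1 hb))
        (Finset.mem_of_mem_erase (Finset.mem_preimage.1 hd))
      subst this
      rfl
  refine ⟨s, hs1, hs2, P₁, P₂, hP₁NC, hP₂NC, ?_⟩
  -- glue = Q
  rw [glue]
  have hpart1 : P₁.image (Finset.image (e1 n s hs2)) =
      Q.filter (fun C => ∀ x ∈ C, 0 < x.val ∧ x.val < s) := by
    rw [hP₁def, Finset.image_image]
    have : ∀ C ∈ Q.filter (fun C => ∀ x ∈ C, 0 < x.val ∧ x.val < s),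
        (Finset.image (e1 n s hs2) ∘ fun C => C.preimage (e1 n s hs2) (e1_inj hs2).injOn) C
          = C := by
      intro C hCf
      rw [Finset.mem_filter] at hCf
      ext x
      simp only [Function.comp_apply, Finset.mem_image, Finset.mem_preimage]
      constructor
      · rintro ⟨y, hy, rfl⟩; exact hy
      · intro hx
        obtain ⟨hx0, hxs⟩ := hCf.2 x hx
        obtain ⟨y, hy⟩ := e1_cover hs2 x hx0 hxs
        exact ⟨y, by rw [hy]; exact hx, hy⟩
    rw [Finset.image_congr this, Finset.image_id']
  rw [hpart1]
  by_cases hsn : s < n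
  · rw [if_pos hsn]
    have hpos : 0 < n - s := by omega
    have hsfin := factB hsn
    have hpart2 : P₂.image (fun B => if ∃ y ∈ B, y.val = 0 then
        insert (⟨0, by omega⟩ : Fin n) (B.image (e2 n s)) else B.image (e2 n s)) =
        Q.filter (fun C => ∃ x ∈ C, s ≤ x.val) := by
      rw [hP₂def, Finset.image_image]
      have : ∀ C ∈ Q.filter (fun C => ∃ x ∈ C, s ≤ x.val),
          ((fun B => if ∃ y ∈ B, y.val = 0 then
            insert (⟨0, by omega⟩ : Fin n) (B.image (e2 n s)) else B.image (e2 n s)) ∘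
            fun C => (C.erase z).preimage (e2 n s) e2_inj.injOn) C = C := by
        intro C hCf
        rw [Finset.mem_filter] at hCf
        have hsub : ∀ x ∈ C.erase z, s ≤ x.val := by
          intro x hx
          obtain ⟨hxz, hxC⟩ := Finset.mem_erase.1 hx
          by_cases hCB₀ : C = B₀
          · exact factA x (hCB₀ ▸ hxC) hxz
          · rcases fact_nostraddle C hCf.1 hCB₀ with h' | h'
            · exfalso
              obtain ⟨x', hx', hxs'⟩ := hCf.2
              have := h' x' hx'
              omega
            · exact h' x hxC
        have himg : ((C.erase z).preimage (e2 n s) e2_inj.injOn).image (e2 n s)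
            = C.erase z := by
          ext x
          simp only [Finset.mem_image, Finset.mem_preimage]
          constructor
          · rintro ⟨y, hy, rfl⟩; exact hy
          · intro hx
            obtain ⟨y, hy⟩ := e2_cover x (hsub x hx)
            exact ⟨y, by rw [hy]; exact hx, hy⟩
        simp only [Function.comp_apply]
        by_cases hs_mem : (⟨s, hsn⟩ : Fin n) ∈ C
        · have hCB₀ : C = B₀ := hdisj C hCf.1 B₀ hB₀Q _ hs_mem hsfin
          have hcond : ∃ y ∈ (C.erase z).preimage (e2 n s) e2_inj.injOn, y.val = 0 := by
            refine ⟨⟨0, hpos⟩, Finset.mem_preimage.2 (Finset.mem_erase.2 ⟨?_, ?_⟩), rfl⟩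
            · intro h
              have := val_eq_zero_of_eq_mk h
              rw [e2_val] at this
              omega
            · have : e2 n s ⟨0, hpos⟩ = (⟨s, hsn⟩ : Fin n) := by
                apply Fin.ext
                rw [e2_val]
                exact Nat.zero_add s
              rw [this]
              exact hs_mem
          rw [if_pos hcond, himg, Finset.insert_erase (hCB₀ ▸ hzB₀)]
        · have hCB₀ : C ≠ B₀ := fun h => hs_mem (h ▸ hsfin)
          have hzC : z ∉ C := fun h => hCB₀ (hz_only C hCf.1 h)
          have hcond : ¬ ∃ y ∈ (C.erase z).preimage (e2 n s) e2_inj.injOn, y.val = 0 := by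
            rintro ⟨y, hy, hy0⟩
            have hmem := Finset.mem_of_mem_erase (Finset.mem_preimage.1 hy)
            have : e2 n s y = (⟨s, hsn⟩ : Fin n) := by
              apply Fin.ext
              rw [e2_val, hy0]
              exact Nat.zero_add s
            rw [this] at hmem
            exact hs_mem hmem
          rw [if_neg hcond, himg, Finset.erase_eq_of_notMem hzC]
      rw [Finset.image_congr this, Finset.image_id']
    rw [hpart2]
    ext C
    simp only [Finset.mem_union, Finset.mem_filter]
    constructor
    · rintro (⟨hC, _⟩ | ⟨hC, _⟩) <;> exact hC
    · intro hC
      by_cases hCB₀ : C = B₀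
      · right
        exact ⟨hC, ⟨s, hsn⟩, hCB₀ ▸ hsfin, le_refl s⟩
      · have hzC : z ∉ C := fun h => hCB₀ (hz_only C hC h)
        rcases fact_nostraddle C hC hCB₀ with h' | h'
        · left
          refine ⟨hC, fun x hx => ⟨?_, h' x hx⟩⟩
          rcases Nat.eq_zero_or_pos x.val with h0 | h0
          · exact absurd ((hz_iff x).1 h0 ▸ hx) hzC
          · exact h0
        · right
          obtain ⟨x, hx⟩ := hne C hC
          exact ⟨hC, x, hx, h' x hx⟩
  · rw [if_neg hsn]
    have hB₀z := factC hsn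
    ext C
    simp only [Finset.mem_union, Finset.mem_filter, Finset.mem_singleton]
    constructor
    · rintro (⟨hC, _⟩ | hC)
      · exact hC
      · rw [hC, ← hB₀z]
        exact hB₀Q
    · intro hC
      by_cases hCB₀ : C = B₀
      · right
        rw [hCB₀, hB₀z]
      · left
        have hzC : z ∉ C := fun h => hCB₀ (hz_only C hC h)
        refine ⟨hC, fun x hx => ⟨?_, ?_⟩⟩
        · rcases Nat.eq_zero_or_pos x.val with h0 | h0
          · exact absurd ((hz_iff x).1 h0 ▸ hx) hzC
          · exact h0
        · have := x.isLt
          omega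
end GlueSurj

section KeyRec

lemma NC_of_eq_zero {m : ℕ} (hm : m = 0) : NC m = {(∅ : Finset (Finset (Fin m)))} := by
  subst hm; exact NC_zero

lemma key_rec (r : ℕ → ℝ) (j n : ℕ) (hn : 1 ≤ n) :
    hm r j n = ∑ s ∈ Finset.Icc 1 n, cm r (s - 1) * hm r (j + 1) (n - s) := by
  classical
  rw [hm, if_neg (by omega)]
  have step1 : ∀ s ∈ Finset.Icc 1 n, cm r (s-1) * hm r (j+1) (n-s)
      = ∑ p ∈ (NC (s-1)) ×ˢ (NC (n-s)),
          (∏ B ∈ p.1, r B.card) * (if n - s = 0 then r (j+1) else hw r (j+1) p.2) := by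
    intro s hs
    rw [Finset.sum_product, cm, Finset.sum_mul]
    refine Finset.sum_congr rfl fun P₁ _ => ?_
    dsimp only
    rw [← Finset.mul_sum]
    congr 1
    by_cases h0 : n - s = 0
    · rw [hm, if_pos h0, NC_of_eq_zero h0, Finset.sum_singleton, if_pos h0]
    · rw [hm, if_neg h0]
      exact (Finset.sum_congr rfl fun P₂ _ => (if_neg h0)).symm
  rw [Finset.sum_congr rfl step1, Finset.sum_sigma']
  symm
  refine Finset.sum_bij
    (fun x hx => glue n x.1 (Finset.mem_Icc.1 (Finset.mem_sigma.1 hx).1).1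
      (Finset.mem_Icc.1 (Finset.mem_sigma.1 hx).1).2 x.2.1 x.2.2)
    ?_ ?_ ?_ ?_
  · intro x hx
    exact glue_mem_NC _ _ (Finset.mem_product.1 (Finset.mem_sigma.1 hx).2).1
      (Finset.mem_product.1 (Finset.mem_sigma.1 hx).2).2
  · rintro ⟨s₁, P₁, P₂⟩ hx₁ ⟨s₂, Q₁, Q₂⟩ hx₂ heq
    have hP₁ := (Finset.mem_product.1 (Finset.mem_sigma.1 hx₁).2).1
    have hP₂ := (Finset.mem_product.1 (Finset.mem_sigma.1 hx₁).2).2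
    have hQ₁ := (Finset.mem_product.1 (Finset.mem_sigma.1 hx₂).2).1
    have hQ₂ := (Finset.mem_product.1 (Finset.mem_sigma.1 hx₂).2).2
    have hss : s₁ = s₂ := glue_s_eq _ _ _ _ hP₁ hP₂ hQ₁ hQ₂ heq
    subst hss
    obtain ⟨hq1, hq2⟩ := glue_comps_eq _ _ _ _ hP₁ hP₂ hQ₁ hQ₂ heq
    dsimp only at hq1 hq2
    rw [hq1, hq2]
  · intro b hb
    obtain ⟨s, h1, h2, P₁, P₂, hP₁, hP₂, heq⟩ := glue_surj hn hb
    refine ⟨⟨s, P₁, P₂⟩, Finset.mem_sigma.2 ⟨Finset.mem_Icc.2 ⟨h1, h2⟩,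
      Finset.mem_product.2 ⟨hP₁, hP₂⟩⟩, heq⟩
  · intro x hx
    exact (glue_weight r j _ _ (Finset.mem_product.1 (Finset.mem_sigma.1 hx).2).1
      (Finset.mem_product.1 (Finset.mem_sigma.1 hx).2).2).symm
end KeyRec


lemma coeff_psComp (f a : PowerSeries ℝ) (n : ℕ) :
    coeff n (psComp f a) = ∑ k ∈ Finset.range (n + 1), (coeff k f) * (coeff n (a ^ k)) :=
  coeff_mk _ _

lemma coeff_Xpow_mul (g : PowerSeries ℝ) (k n : ℕ) :
    coeff n (X ^ k * g) = if k ≤ n then coeff (n - k) g else 0 := by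
  rw [coeff_mul]
  by_cases h : k ≤ n
  · rw [if_pos h, Finset.sum_eq_single (k, n - k)]
    · simp [coeff_X_pow]
    · rintro ⟨p, q⟩ hpq hne
      rw [Finset.HasAntidiagonal.mem_antidiagonal] at hpq
      rw [coeff_X_pow, if_neg, zero_mul]
      rintro rfl
      exact hne (by simp; omega)
    · intro hmem
      exact absurd (Finset.HasAntidiagonal.mem_antidiagonal.2 (by omega)) hmem
  · rw [if_neg h]
    refine Finset.sum_eq_zero fun ⟨p, q⟩ hpq => ?_
    rw [Finset.HasAntidiagonal.mem_antidiagonal] at hpq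
    rw [coeff_X_pow, if_neg (by omega), zero_mul]

lemma coeff_pow_eq_zero {a : PowerSeries ℝ} (ha : constantCoeff a = 0)
    {n k : ℕ} (h : n < k) : coeff n (a ^ k) = 0 := by
  obtain ⟨b, rfl⟩ := (PowerSeries.X_dvd_iff).2 ha
  rw [mul_pow, coeff_Xpow_mul, if_neg (by omega)]

lemma coeff_pow_congr {a b : PowerSeries ℝ} {N : ℕ}
    (h : ∀ i ≤ N, coeff i a = coeff i b) (k : ℕ) :
    ∀ n ≤ N, coeff n (a ^ k) = coeff n (b ^ k) := by
  induction k with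
  | zero => intro n _; simp
  | succ k ih =>
    intro n hn
    rw [pow_succ, pow_succ, coeff_mul, coeff_mul]
    refine Finset.sum_congr rfl fun ⟨p, q⟩ hpq => ?_
    rw [Finset.HasAntidiagonal.mem_antidiagonal] at hpq
    rw [ih p (by omega), h q (by omega)]

lemma psComp_add (f g a : PowerSeries ℝ) :
    psComp (f + g) a = psComp f a + psComp g a := by
  ext n
  simp only [coeff_psComp, map_add, add_mul, Finset.sum_add_distrib]

lemma psComp_C (c : ℝ) (a : PowerSeries ℝ) : psComp (PowerSeries.C c) a = PowerSeries.C c := by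
  ext n
  rw [coeff_psComp]
  rcases Nat.eq_zero_or_pos n with rfl | hn
  · simp
  · rw [Finset.sum_eq_zero, coeff_C, if_neg (by omega)]
    intro k hk
    rw [coeff_C]
    rcases Nat.eq_zero_or_pos k with rfl | hk'
    · simp [hn.ne']
    · rw [if_neg (by omega), zero_mul]

lemma psComp_X_mul (f a : PowerSeries ℝ) (ha : constantCoeff a = 0) :
    psComp (X * f) a = a * psComp f a := by
  ext n
  rw [coeff_psComp, coeff_mul]
  have key : ∀ k ∈ Finset.range (n + 1), coeff k (X * f) * coeff n (a ^ k)
      = (if k = 0 then 0 else coeff (k - 1) f * coeff n (a ^ k)) := by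
    intro k _
    rcases Nat.eq_zero_or_pos k with rfl | hk
    · simp
    · obtain ⟨k', rfl⟩ := Nat.exists_eq_succ_of_ne_zero hk.ne'
      rw [if_neg (by omega), coeff_succ_X_mul, Nat.succ_sub_one]
  rw [Finset.sum_congr rfl key, Finset.sum_range_succ']
  simp only [Nat.succ_ne_zero, if_neg, if_pos rfl, Nat.succ_sub_one, add_zero, reduceIte]
  have h1 : ∀ p ∈ antidiagonal n, coeff p.1 a * coeff p.2 (psComp f a)
      = ∑ k ∈ Finset.range (n + 1), coeff p.1 a * (coeff k f * coeff p.2 (a ^ k)) := by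
    intro p hp
    rw [Finset.HasAntidiagonal.mem_antidiagonal] at hp
    rw [coeff_psComp, Finset.mul_sum]
    refine Finset.sum_subset (Finset.range_subset_range.2 (by omega)) ?_
    intro k _ hk
    rw [Finset.mem_range, not_lt] at hk
    rw [coeff_pow_eq_zero ha (by omega), mul_zero, mul_zero]
  rw [Finset.sum_congr rfl h1, Finset.sum_comm]
  have h2 : ∀ k ∈ Finset.range (n + 1),
      (∑ p ∈ antidiagonal n, coeff p.1 a * (coeff k f * coeff p.2 (a ^ k)))
      = coeff k f * coeff n (a ^ (k + 1)) := by
    intro k _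
    rw [pow_succ', coeff_mul, Finset.mul_sum]
    refine Finset.sum_congr rfl fun p _ => by ring
  rw [Finset.sum_congr rfl h2, Finset.sum_range_succ, coeff_pow_eq_zero ha (by omega),
    mul_zero, add_zero]

noncomputable def Tser (r : ℕ → ℝ) (j : ℕ) : PowerSeries ℝ :=
  psComp (Rser fun k => r (k + j)) (X * Mser (cm r))

lemma Rser_decomp (r' : ℕ → ℝ) :
    Rser r' = X * (PowerSeries.C (r' 1) + Rser (fun k => r' (k + 1))) := by
  ext n
  cases n with
  | zero => simp [Rser, coeff_mk]
  | succ n =>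
    rw [coeff_succ_X_mul, map_add, coeff_C]
    cases n with
    | zero => simp [Rser, coeff_mk]
    | succ n => simp [Rser, coeff_mk]

lemma constantCoeff_XM (m : ℕ → ℝ) : constantCoeff (X * Mser m) = 0 := by
  rw [map_mul, constantCoeff_X, zero_mul]

lemma coeff_Mser_cm (r : ℕ → ℝ) (k : ℕ) : coeff k (Mser (cm r)) = cm r k := by
  rw [Mser, coeff_mk]
  split
  · rename_i h; rw [h, cm_zero]
  · rfl

lemma coeff_XM_cm (r : ℕ → ℝ) (k : ℕ) :
    coeff k (X * Mser (cm r)) = if k = 0 then 0 else cm r (k - 1) := by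
  cases k with
  | zero => simp [constantCoeff_XM]
  | succ k => rw [coeff_succ_X_mul, coeff_Mser_cm, if_neg (Nat.succ_ne_zero k), Nat.succ_sub_one]

lemma Tser_succ (r : ℕ → ℝ) (j : ℕ) :
    Tser r j = (X * Mser (cm r)) * (PowerSeries.C (r (1 + j)) + Tser r (j + 1)) := by
  have hfe : (fun k => (fun k' => r (k' + j)) (k + 1)) = fun k => r (k + (j + 1)) := by
    funext k
    show r (k + 1 + j) = r (k + (j + 1))
    congr 1
    omega
  rw [Tser, Rser_decomp (fun k => r (k + j)), hfe,
    psComp_X_mul _ _ (constantCoeff_XM _), psComp_add, psComp_C, Tser]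

lemma coeff_Tser (r : ℕ → ℝ) : ∀ n j, coeff n (Tser r j) = if n = 0 then 0 else hm r j n := by
  intro n
  induction n using Nat.strong_induction_on with
  | _ n IH =>
    intro j
    cases n with
    | zero =>
      simp [Tser, coeff_psComp, Rser, coeff_mk]
    | succ n =>
      rw [if_neg (Nat.succ_ne_zero n), Tser_succ, coeff_mul,
        key_rec r j (n+1) (by omega)]
      rw [Finset.Nat.sum_antidiagonal_eq_sum_range_succ_mk]
      rw [show Finset.Icc 1 (n+1) = (Finset.range (n+1+1)).filter (1 ≤ ·) by
        ext i; simp [Finset.mem_Icc, Finset.mem_range, Finset.mem_filter]; omega]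
      rw [Finset.sum_filter]
      refine Finset.sum_congr rfl fun i hi => ?_
      rw [Finset.mem_range] at hi
      dsimp only
      rw [coeff_XM_cm]
      rcases Nat.eq_zero_or_pos i with rfl | hipos
      · simp
      · rw [if_neg (show ¬ i = 0 by omega), if_pos (show 1 ≤ i from hipos), map_add, coeff_C,
          IH (n + 1 - i) (by omega) (j + 1)]
        rcases Nat.lt_or_ge i (n+1) with hlt | hge
        · rw [if_neg (by omega), if_neg (by omega), zero_add]
        · have : i = n + 1 := by omega
          subst this
          rw [if_pos (by omega), if_pos (by omega), add_zero, Nat.sub_self, hm,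
            if_pos rfl, add_comm 1 j]

lemma cm_fixed_point (r : ℕ → ℝ) :
    Mser (cm r) = 1 + psComp (Rser r) (X * Mser (cm r)) := by
  have hT0 : psComp (Rser r) (X * Mser (cm r)) = Tser r 0 := rfl
  ext n
  rw [map_add, hT0, coeff_Tser, coeff_Mser_cm]
  cases n with
  | zero => simp [cm_zero]
  | succ n =>
    rw [if_neg (Nat.succ_ne_zero n), ← cm_eq_hm r (by omega), coeff_one,
      if_neg (Nat.succ_ne_zero n), zero_add]

/-- Proposition 2.1 (1) ⟺ (3): for `G(z) = z⁻¹ + ∑ m_n z^{-n-1}` and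
`K(z) = z⁻¹ + ∑ r_n z^{n-1}`, the functional relation `K(G(z)) = z` holds at the level
of formal (Laurent) power series — which, after multiplying through by `G`, is the
power-series identity `M = 1 + R̂(w·M)` in the variable `w = 1/z` — if and only if the
free moment-cumulant formula `m_n = ∑_{π ∈ NC(n)} ∏_{V ∈ π} r_{|V|}` holds for all `n ≥ 1`. -/
theorem K_comp_G_eq_id_iff_moment_cumulant (m r : ℕ → ℝ) :
    Mser m = 1 + psComp (Rser r) (PowerSeries.X * Mser m) ↔
      ∀ n : ℕ, 1 ≤ n → m n = ∑ P ∈ NC n, ∏ B ∈ P, r B.card := by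
  have hcm : ∀ n, 1 ≤ n → (∑ P ∈ NC n, ∏ B ∈ P, r B.card) = cm r n := fun n _ => rfl
  constructor
  · intro h n hn
    rw [hcm n hn]
    clear hcm
    induction n using Nat.strong_induction_on with
    | _ n IH =>
      have hagree : ∀ i ≤ n - 1, coeff i (Mser m) = coeff i (Mser (cm r)) := by
        intro i hi
        rw [Mser, Mser, coeff_mk, coeff_mk]
        split
        · rfl
        · rename_i hi0
          exact IH i (by omega) (by omega)
      have h1 : m n = coeff n (1 + psComp (Rser r) (X * Mser m)) := by
        rw [← h, Mser, coeff_mk, if_neg (by omega)]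
      have h2 : cm r n = coeff n (1 + psComp (Rser r) (X * Mser (cm r))) := by
        rw [← cm_fixed_point, coeff_Mser_cm]
      rw [h1, h2, map_add, map_add]
      congr 1
      rw [coeff_psComp, coeff_psComp]
      refine Finset.sum_congr rfl fun k hk => ?_
      rcases Nat.eq_zero_or_pos k with rfl | hkpos
      · simp [Rser, coeff_mk]
      · congr 1
        rw [mul_pow, mul_pow, coeff_Xpow_mul, coeff_Xpow_mul]
        rw [Finset.mem_range] at hk
        split
        · exact coeff_pow_congr hagree k _ (by omega)
        · rfl
  · intro h
    have : Mser m = Mser (cm r) := by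
      ext k
      rw [Mser, Mser, coeff_mk, coeff_mk]
      split
      · rfl
      · rename_i hk; exact h k (by omega)
    rw [this]
    exact cm_fixed_point r
end

section
/- The Möbius function of the non-crossing partition lattice NC(n) satisfies Möb_NC(0_n, π) = (−1)^{n−|π|} Π_{V ∈ π} C_{|V|−1}, where C_k = (1/(k+1))·C(2k,k) is the k-th Catalan number. -/
open Finset

/-- A finpartition of `{1,…,n}` is non-crossing if there are no `a < b < c < d` with
`a, c` in one block and `b, d` in a different block. -/
def Finpartition.IsNonCrossing {n : ℕ}
    (π : Finpartition (Finset.univ : Finset (Fin n))) : Prop :=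
  ∀ a b c d : Fin n, a < b → b < c → c < d →
    ∀ B₁ ∈ π.parts, ∀ B₂ ∈ π.parts, a ∈ B₁ → c ∈ B₁ → b ∈ B₂ → d ∈ B₂ → B₁ = B₂

private def Bfn (r : ℕ) : ℤ := ∑ j ∈ range (r+1), (-1:ℤ)^j * (catalan j : ℤ) * (j.choose (r - j) : ℤ)
private def Efn (s : ℕ) : ℤ := ∑ t ∈ range (s+1), (-1:ℤ)^t * (catalan (t+1) : ℤ) * (t.choose (s - t) : ℤ)

private lemma R2 (s : ℕ) : Efn s = ∑ i ∈ range (s+1), Bfn i * Bfn (s - i) := by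
  have hcat : ∀ t : ℕ, (catalan (t+1) : ℤ) = ∑ p ∈ range (t+1), (catalan p : ℤ) * (catalan (t - p) : ℤ) := by
    intro t
    rw [catalan_succ', Nat.sum_antidiagonal_eq_sum_range_succ (fun x y => catalan x * catalan y) t]
    push_cast
    rfl
  have hR : ∑ i ∈ range (s+1), Bfn i * Bfn (s - i)
      = ∑ x ∈ (range (s+1)).sigma (fun i => (range (i+1)) ×ˢ (range (s - i + 1))),
          (fun (i : ℕ) (pq : ℕ × ℕ) => (-1:ℤ)^(pq.1 + pq.2) * (catalan pq.1 : ℤ) * (catalan pq.2 : ℤ) *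
            (pq.1.choose (i - pq.1) : ℤ) * (pq.2.choose (s - i - pq.2) : ℤ)) x.1 x.2 := by
    rw [Finset.sum_sigma]
    refine Finset.sum_congr rfl fun i _ => ?_
    rw [Bfn, Bfn, Finset.sum_mul_sum, ← Finset.sum_product']
    refine Finset.sum_congr rfl fun pq _ => ?_
    ring
  have hL : Efn s
      = ∑ x ∈ ((range (s+1)).sigma (fun t => range (t+1))).sigma
            (fun tp => antidiagonal (s - tp.1)),
          (fun (tp : Σ _ : ℕ, ℕ) (ab : ℕ × ℕ) => (-1:ℤ)^(tp.1) * (catalan tp.2 : ℤ) * (catalan (tp.1 - tp.2) : ℤ) *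
            (tp.2.choose ab.1 : ℤ) * ((tp.1 - tp.2).choose ab.2 : ℤ)) x.1 x.2 := by
    rw [Finset.sum_sigma]
    have : Efn s = ∑ x ∈ (range (s+1)).sigma (fun t => range (t+1)),
        (fun (t : ℕ) (p : ℕ) => (-1:ℤ)^t * ((catalan p : ℤ) * (catalan (t - p) : ℤ)) * (t.choose (s - t) : ℤ)) x.1 x.2 := by
      rw [Finset.sum_sigma]
      rw [Efn]
      refine Finset.sum_congr rfl fun t _ => ?_
      rw [hcat, Finset.mul_sum, Finset.sum_mul]
    rw [this]
    refine Finset.sum_congr rfl fun tp htp => ?_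
    obtain ⟨t, p⟩ := tp
    simp only [mem_sigma, mem_range] at htp
    have hv : ((t).choose (s - t) : ℤ) = ∑ ab ∈ antidiagonal (s - t), (p.choose ab.1 : ℤ) * ((t - p).choose ab.2 : ℤ) := by
      have h := Nat.add_choose_eq p (t - p) (s - t)
      rw [Nat.add_sub_cancel' (by omega : p ≤ t)] at h
      rw [h]
      push_cast
      rfl
    simp only
    rw [hv, Finset.mul_sum]
    exact Finset.sum_congr rfl fun ab _ => by ring
  rw [hL, hR]
  refine Finset.sum_nbij' (fun x => ⟨x.1.2 + x.2.1, (x.1.2, x.1.1 - x.1.2)⟩)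
    (fun y => ⟨⟨y.2.1 + y.2.2, y.2.1⟩, (y.1 - y.2.1, s - y.1 - y.2.2)⟩) ?_ ?_ ?_ ?_ ?_
  · rintro ⟨⟨t, p⟩, ⟨a, b⟩⟩ hx
    simp only [mem_sigma, mem_range, mem_product, Finset.HasAntidiagonal.mem_antidiagonal] at hx ⊢
    omega
  · rintro ⟨i, ⟨p, q⟩⟩ hy
    simp only [mem_sigma, mem_range, mem_product, Finset.HasAntidiagonal.mem_antidiagonal] at hy ⊢
    omega
  · rintro ⟨⟨t, p⟩, ⟨a, b⟩⟩ hx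
    simp only [mem_sigma, mem_range, mem_product, Finset.HasAntidiagonal.mem_antidiagonal] at hx
    have h1 : p + a - p = a := by omega
    have h2 : p + (t - p) = t := by omega
    have h3 : s - (p + a) - (t - p) = b := by omega
    simp [h1, h2, h3]
  · rintro ⟨i, ⟨p, q⟩⟩ hy
    simp only [mem_sigma, mem_range, mem_product, Finset.HasAntidiagonal.mem_antidiagonal] at hy
    have h1 : p + q - p = q := by omega
    have h2 : p + (i - p) = i := by omega
    simp [h1, h2]
  · rintro ⟨⟨t, p⟩, ⟨a, b⟩⟩ hx
    simp only [mem_sigma, mem_range, mem_product, Finset.HasAntidiagonal.mem_antidiagonal] at hx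
    have h1 : p + a - p = a := by omega
    have h2 : p + (t - p) = t := by omega
    have h3 : s - (p + a) - (t - p) = b := by omega
    simp only [h1, h2, h3]
    try ring

private lemma R1 (r : ℕ) : Bfn (r+2) = - Efn (r+1) - Efn r := by
  have peel0 : Bfn (r+2) = ∑ t ∈ range (r+2), (-1:ℤ)^(t+1) * (catalan (t+1) : ℤ) * ((t+1).choose (r+1-t) : ℤ) := by
    rw [Bfn, Finset.sum_range_succ']
    have h0 : ((0:ℕ).choose (r+2-0) : ℤ) = 0 := by
      simp [Nat.choose_eq_zero_of_lt]
    simp only [h0]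
    rw [mul_zero, add_zero]
    refine Finset.sum_congr rfl fun t _ => ?_
    have h : r+2-(t+1) = r+1-t := by omega
    rw [h]
  rw [peel0, Finset.sum_range_succ]
  have hlast : (-1:ℤ)^(r+1+1) * (catalan (r+1+1) : ℤ) * (((r+1)+1).choose (r+1-(r+1)) : ℤ)
      = (-1:ℤ)^r * (catalan (r+2) : ℤ) := by
    simp only [Nat.sub_self, Nat.choose_zero_right, Nat.cast_one, mul_one, pow_succ]
    ring
  rw [hlast]
  have hsplit : ∀ t ∈ range (r+1), (-1:ℤ)^(t+1) * (catalan (t+1) : ℤ) * ((t+1).choose (r+1-t) : ℤ)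
      = -((-1:ℤ)^t * (catalan (t+1) : ℤ) * ((t).choose (r+1-t) : ℤ))
        - ((-1:ℤ)^t * (catalan (t+1) : ℤ) * ((t).choose (r-t) : ℤ)) := by
    intro t ht
    simp only [mem_range] at ht
    have hp : (t+1).choose (r+1-t) = t.choose (r-t) + t.choose (r+1-t) := by
      have : r+1-t = (r-t)+1 := by omega
      rw [this, Nat.choose_succ_succ]
    rw [hp]
    push_cast
    ring
  rw [Finset.sum_congr rfl hsplit, Finset.sum_sub_distrib]
  have hE1 : Efn (r+1) = (∑ t ∈ range (r+1), (-1:ℤ)^t * (catalan (t+1) : ℤ) * ((t).choose (r+1-t) : ℤ))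
      + (-1:ℤ)^(r+1) * (catalan (r+2) : ℤ) := by
    rw [Efn, Finset.sum_range_succ]
    congr 1
    simp only [Nat.sub_self, Nat.choose_zero_right, Nat.cast_one, mul_one]
  have hE2 : Efn r = ∑ t ∈ range (r+1), (-1:ℤ)^t * (catalan (t+1) : ℤ) * ((t).choose (r-t) : ℤ) := by
    rw [Efn]
  rw [Finset.sum_neg_distrib, hE1, hE2]
  ring

private lemma Bval : ∀ r : ℕ, Bfn r = (-1:ℤ)^r := by
  intro r
  induction r using Nat.strong_induction_on with
  | _ r ih =>
    match r with
    | 0 => simp [Bfn]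
    | 1 =>
      rw [Bfn]
      simp [Finset.sum_range_succ]
    | (k+2) =>
      have hE : ∀ s : ℕ, s < k + 2 → Efn s = (s+1) * (-1:ℤ)^s := by
        intro s hs
        rw [R2]
        have : ∀ i ∈ range (s+1), Bfn i * Bfn (s - i) = (-1:ℤ)^s := by
          intro i hi
          simp only [mem_range] at hi
          rw [ih i (by omega), ih (s-i) (by omega), ← pow_add]
          congr 1
          omega
        rw [Finset.sum_congr rfl this, Finset.sum_const, Finset.card_range]
        push_cast
        ring
      rw [R1, hE (k+1) (by omega), hE k (by omega)]
      push_cast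
      ring

/-- The key numeric identity: `∑_k C(k, m-k) · (-1)^(k-1) · catalan(k-1) = 0` for `m ≥ 2`. -/
private lemma NUM1 (M : ℕ) :
    ∑ k ∈ range (M+3), ((k.choose (M+2-k) : ℤ)) * ((-1:ℤ)^(k-1) * (catalan (k-1) : ℤ)) = 0 := by
  rw [Finset.sum_range_succ']
  have h0 : ((Nat.choose 0 (M+2-0) : ℤ)) * ((-1:ℤ)^(0-1) * (catalan (0-1) : ℤ)) = 0 := by
    simp [Nat.choose_eq_zero_of_lt]
  rw [h0, add_zero]
  have hbody : ∀ j ∈ range (M+2), ((j+1).choose (M+2-(j+1)) : ℤ) * ((-1:ℤ)^(j+1-1) * (catalan (j+1-1) : ℤ))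
      = ((j+1).choose (M+1-j) : ℤ) * ((-1:ℤ)^j * (catalan j : ℤ)) := by
    intro j _
    have h1 : M+2-(j+1) = M+1-j := by omega
    have h2 : j+1-1 = j := by omega
    rw [h1, h2]
  rw [Finset.sum_congr rfl hbody, Finset.sum_range_succ]
  have hlast : (((M+1)+1).choose (M+1-(M+1)) : ℤ) * ((-1:ℤ)^(M+1) * (catalan (M+1) : ℤ))
      = (-1:ℤ)^(M+1) * (catalan (M+1) : ℤ) := by
    simp [Nat.sub_self]
  rw [hlast]
  have hsplit : ∀ j ∈ range (M+1), ((j+1).choose (M+1-j) : ℤ) * ((-1:ℤ)^j * (catalan j : ℤ))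
      = ((-1:ℤ)^j * (catalan j : ℤ) * (j.choose (M-j) : ℤ))
        + ((-1:ℤ)^j * (catalan j : ℤ) * (j.choose (M+1-j) : ℤ)) := by
    intro j hj
    simp only [mem_range] at hj
    have hp : (j+1).choose (M+1-j) = j.choose (M-j) + j.choose (M+1-j) := by
      have : M+1-j = (M-j)+1 := by omega
      rw [this, Nat.choose_succ_succ]
    rw [hp]
    push_cast
    ring
  rw [Finset.sum_congr rfl hsplit, Finset.sum_add_distrib]
  have hBM : ∑ j ∈ range (M+1), (-1:ℤ)^j * (catalan j : ℤ) * (j.choose (M-j) : ℤ) = Bfn M := rfl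
  have hBM1 : ∑ j ∈ range (M+1), (-1:ℤ)^j * (catalan j : ℤ) * (j.choose (M+1-j) : ℤ)
      = Bfn (M+1) - (-1:ℤ)^(M+1) * (catalan (M+1) : ℤ) := by
    have hh : Bfn (M+1) = (∑ j ∈ range (M+1), (-1:ℤ)^j * (catalan j : ℤ) * (j.choose (M+1-j) : ℤ))
        + (-1:ℤ)^(M+1) * (catalan (M+1) : ℤ) := by
      rw [Bfn, Finset.sum_range_succ]
      congr 1
      rw [Nat.sub_self]
      simp
    rw [hh]
    ring
  rw [hBM, hBM1, Bval, Bval]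
  ring

open scoped Classical

variable {α : Type*} [LinearOrder α]

/-- `B` is a "good" subset of `V`: contains the minimum of `V` and any two elements of
`V \ B` are separated by an element of `B`. -/
private def IsGood (V B : Finset α) : Prop :=
  B ⊆ V ∧ (∀ x ∈ V, x ∉ B → ∀ y ∈ V, y ∉ B → x < y → ∃ b ∈ B, x < b ∧ b < y) ∧
    (∀ x ∈ V, (∀ y ∈ V, x ≤ y) → x ∈ B)

private lemma NUM2 (m : ℕ) (f : ℕ → ℝ) :
    ∑ k ∈ range (m+3), (k.choose (m+2-k) : ℝ) * f k
      = ∑ k ∈ range (m+2), (k.choose (m+1-k) : ℝ) * f (k+1)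
        + ∑ k ∈ range (m+1), (k.choose (m-k) : ℝ) * f (k+1) := by
  rw [Finset.sum_range_succ']
  have h0 : ((Nat.choose 0 (m+2-0) : ℝ)) * f 0 = 0 := by
    simp [Nat.choose_eq_zero_of_lt]
  rw [h0, add_zero]
  have hsplit : ∀ j ∈ range (m+1), ((j+1).choose (m+2-(j+1)) : ℝ) * f (j+1)
      = (j.choose (m+1-j) : ℝ) * f (j+1) + (j.choose (m-j) : ℝ) * f (j+1) := by
    intro j hj
    simp only [mem_range] at hj
    have hp : (j+1).choose (m+2-(j+1)) = j.choose (m-j) + j.choose (m+1-j) := by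
      have h1 : m+2-(j+1) = (m-j)+1 := by omega
      rw [h1, Nat.choose_succ_succ]
      have h2 : (m - j).succ = m+1-j := by omega
      rw [h2]
    rw [hp]
    push_cast
    ring
  rw [Finset.sum_range_succ, Finset.sum_congr rfl hsplit, Finset.sum_add_distrib]
  have hlast : (((m+1)+1).choose (m+2-((m+1)+1)) : ℝ) * f ((m+1)+1)
      = ((m+1).choose (m+1-(m+1)) : ℝ) * f ((m+1)+1) := by
    norm_num
  rw [hlast]
  rw [Finset.sum_range_succ (fun k => (k.choose (m+1-k) : ℝ) * f (k+1)) (m+1)]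
  ring

private lemma SUMG : ∀ (m : ℕ) (V : Finset α), V.card = m → ∀ f : ℕ → ℝ,
    ∑ B ∈ V.powerset.filter (IsGood V), f B.card
      = ∑ k ∈ range (m+1), (k.choose (m-k) : ℝ) * f k := by
  intro m
  induction m using Nat.strong_induction_on with
  | _ m ih =>
    intro V hV f
    match m, hV with
    | 0, hV =>
      have hVe : V = ∅ := Finset.card_eq_zero.mp hV
      subst hVe
      have : (∅ : Finset α).powerset.filter (IsGood ∅) = {∅} := by
        ext B
        simp only [Finset.powerset_empty, Finset.mem_filter, Finset.mem_singleton]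
        constructor
        · rintro ⟨h, -⟩; exact h
        · rintro rfl
          exact ⟨rfl, ⟨Finset.Subset.refl _, fun x hx => absurd hx (Finset.notMem_empty x),
            fun x hx => absurd hx (Finset.notMem_empty x)⟩⟩
      rw [this]
      simp
    | 1, hV =>
      obtain ⟨v, hVe⟩ := Finset.card_eq_one.mp hV
      subst hVe
      have : ({v} : Finset α).powerset.filter (IsGood {v}) = {({v} : Finset α)} := by
        ext B
        simp only [Finset.mem_filter, Finset.mem_powerset, Finset.mem_singleton]
        constructor
        · rintro ⟨hs, -, -, hmin⟩
          have hv : v ∈ B := hmin v (Finset.mem_singleton_self v)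
            (fun y hy => le_of_eq (Finset.mem_singleton.mp hy).symm)
          exact Finset.Subset.antisymm hs (Finset.singleton_subset_iff.mpr hv)
        · rintro rfl
          refine ⟨Finset.Subset.refl _, Finset.Subset.refl _, ?_, ?_⟩
          · intro x hx hxB
            exact (hxB hx).elim
          · intro x hx _
            exact hx
      rw [this]
      rw [Finset.sum_singleton, Finset.sum_range_succ, Finset.sum_range_one]
      norm_num
    | (m+2), hV =>
      have hVne : V.Nonempty := by rw [← Finset.card_pos, hV]; omega
      set v1 := V.min' hVne with hv1def
      have hv1V : v1 ∈ V := V.min'_mem hVne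
      have hv1min : ∀ y ∈ V, v1 ≤ y := fun y hy => V.min'_le y hy
      have hV'card : (V.erase v1).card = m+1 := by
        rw [Finset.card_erase_of_mem hv1V, hV]
        omega
      have hV'ne : (V.erase v1).Nonempty := by rw [← Finset.card_pos, hV'card]; omega
      set v2 := (V.erase v1).min' hV'ne with hv2def
      have hv2V' : v2 ∈ V.erase v1 := (V.erase v1).min'_mem hV'ne
      have hv2min : ∀ y ∈ V.erase v1, v2 ≤ y := fun y hy => (V.erase v1).min'_le y hy
      have hv2V : v2 ∈ V := Finset.mem_of_mem_erase hv2V'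
      have hv2ne : v2 ≠ v1 := Finset.ne_of_mem_erase hv2V'
      have hv12 : v1 < v2 := lt_of_le_of_ne (hv1min v2 hv2V) (Ne.symm hv2ne)
      have hv2minV : ∀ y ∈ V, y ≠ v1 → v2 ≤ y := fun y hy hne =>
        hv2min y (Finset.mem_erase.mpr ⟨hne, hy⟩)
      have hV''card : ((V.erase v1).erase v2).card = m := by
        rw [Finset.card_erase_of_mem hv2V', hV'card]
        omega
      have hmemV'' : ∀ x, x ∈ (V.erase v1).erase v2 ↔ x ∈ V ∧ x ≠ v1 ∧ x ≠ v2 := by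
        intro x
        simp only [Finset.mem_erase]
        tauto
      -- relate good subsets of V to good subsets of V' (case v2 ∈ B)
      have hA : ∑ B ∈ (V.powerset.filter (IsGood V)).filter (fun B => v2 ∈ B), f B.card
          = ∑ B' ∈ (V.erase v1).powerset.filter (IsGood (V.erase v1)), f (B'.card + 1) := by
        refine Finset.sum_nbij' (fun B => B.erase v1) (fun B' => insert v1 B') ?_ ?_ ?_ ?_ ?_
        · intro B hB
          simp only [Finset.mem_filter, Finset.mem_powerset] at hB ⊢
          obtain ⟨⟨hBV, hBg⟩, hv2B⟩ := hB
          obtain ⟨-, hsep, hmin⟩ := hBg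
          refine ⟨Finset.erase_subset_erase v1 hBV, Finset.erase_subset_erase v1 hBV, ?_, ?_⟩
          · intro x hx hxnB y hy hynB hxy
            rw [Finset.mem_erase] at hx hy
            have hxB : x ∉ B := fun h => hxnB (Finset.mem_erase.mpr ⟨hx.1, h⟩)
            have hyB : y ∉ B := fun h => hynB (Finset.mem_erase.mpr ⟨hy.1, h⟩)
            obtain ⟨b, hbB, hxb, hby⟩ := hsep x hx.2 hxB y hy.2 hyB hxy
            exact ⟨b, Finset.mem_erase.mpr ⟨ne_of_gt (lt_of_le_of_lt (hv1min x hx.2) hxb), hbB⟩, hxb, hby⟩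
          · intro x hx hxall
            have hxv2 : x = v2 := le_antisymm (hxall v2 hv2V') (hv2min x hx)
            subst hxv2
            exact Finset.mem_erase.mpr ⟨hv2ne, hv2B⟩
        · intro B' hB'
          simp only [Finset.mem_filter, Finset.mem_powerset] at hB' ⊢
          obtain ⟨hB'V', hB'g⟩ := hB'
          obtain ⟨-, hsep, hmin⟩ := hB'g
          have hv2B' : v2 ∈ B' := hmin v2 hv2V' hv2min
          have hsub : insert v1 B' ⊆ V :=
            Finset.insert_subset hv1V (hB'V'.trans (Finset.erase_subset _ _))
          refine ⟨⟨hsub, hsub, ?_, ?_⟩, Finset.mem_insert_of_mem hv2B'⟩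
          · intro x hx hxn y hy hyn hxy
            rw [Finset.mem_insert, not_or] at hxn hyn
            obtain ⟨b, hbB, hxb, hby⟩ := hsep x (Finset.mem_erase.mpr ⟨hxn.1, hx⟩) hxn.2
              y (Finset.mem_erase.mpr ⟨hyn.1, hy⟩) hyn.2 hxy
            exact ⟨b, Finset.mem_insert_of_mem hbB, hxb, hby⟩
          · intro x hx hxall
            have hxv1 : x = v1 := le_antisymm (hxall v1 hv1V) (hv1min x hx)
            subst hxv1
            exact Finset.mem_insert_self _ _
        · intro B hB
          simp only [Finset.mem_filter, Finset.mem_powerset] at hB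
          have hv1B : v1 ∈ B := hB.1.2.2.2 v1 hv1V hv1min
          exact Finset.insert_erase hv1B
        · intro B' hB'
          simp only [Finset.mem_filter, Finset.mem_powerset] at hB'
          have hv1nB' : v1 ∉ B' := fun h => Finset.notMem_erase v1 V (hB'.1 h)
          exact Finset.erase_insert hv1nB'
        · intro B hB
          simp only [Finset.mem_filter, Finset.mem_powerset] at hB
          have hv1B : v1 ∈ B := hB.1.2.2.2 v1 hv1V hv1min
          have hcard : (B.erase v1).card + 1 = B.card := by
            rw [Finset.card_erase_of_mem hv1B]
            have : 0 < B.card := Finset.card_pos.mpr ⟨v1, hv1B⟩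
            omega
          rw [hcard]
      -- relate good subsets of V to good subsets of V'' (case v2 ∉ B)
      have hB2 : ∑ B ∈ (V.powerset.filter (IsGood V)).filter (fun B => ¬ v2 ∈ B), f B.card
          = ∑ B'' ∈ ((V.erase v1).erase v2).powerset.filter (IsGood ((V.erase v1).erase v2)),
              f (B''.card + 1) := by
        refine Finset.sum_nbij' (fun B => B.erase v1) (fun B'' => insert v1 B'') ?_ ?_ ?_ ?_ ?_
        · intro B hB
          simp only [Finset.mem_filter, Finset.mem_powerset] at hB ⊢
          obtain ⟨⟨hBV, hBg⟩, hv2B⟩ := hB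
          obtain ⟨-, hsep, hmin⟩ := hBg
          have hsub : B.erase v1 ⊆ (V.erase v1).erase v2 := by
            intro x hx
            rw [Finset.mem_erase] at hx
            rw [hmemV'']
            exact ⟨hBV hx.2, hx.1, fun h => hv2B (h ▸ hx.2)⟩
          refine ⟨hsub, hsub, ?_, ?_⟩
          · intro x hx hxnB y hy hynB hxy
            rw [hmemV''] at hx hy
            have hxB : x ∉ B := fun h => hxnB (Finset.mem_erase.mpr ⟨hx.2.1, h⟩)
            have hyB : y ∉ B := fun h => hynB (Finset.mem_erase.mpr ⟨hy.2.1, h⟩)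
            obtain ⟨b, hbB, hxb, hby⟩ := hsep x hx.1 hxB y hy.1 hyB hxy
            exact ⟨b, Finset.mem_erase.mpr ⟨ne_of_gt (lt_of_le_of_lt (hv1min x hx.1) hxb), hbB⟩, hxb, hby⟩
          · intro x hx hxall
            rw [hmemV''] at hx
            have hxB : x ∈ B := by
              by_contra hxB
              have hv2x : v2 < x := lt_of_le_of_ne (hv2minV x hx.1 hx.2.1) (Ne.symm hx.2.2)
              obtain ⟨b, hbB, hv2b, hbx⟩ := hsep v2 hv2V hv2B x hx.1 hxB hv2x
              have hbV'' : b ∈ (V.erase v1).erase v2 := by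
                rw [hmemV'']
                exact ⟨hBV hbB, ne_of_gt (lt_trans hv12 hv2b), ne_of_gt hv2b⟩
              exact absurd (hxall b hbV'') (not_le.mpr hbx)
            exact Finset.mem_erase.mpr ⟨hx.2.1, hxB⟩
        · intro B'' hB''
          simp only [Finset.mem_filter, Finset.mem_powerset] at hB'' ⊢
          obtain ⟨hB''V'', hB''g⟩ := hB''
          obtain ⟨-, hsep, hmin⟩ := hB''g
          have hv2nB'' : v2 ∉ B'' := fun h => by
            have := hB''V'' h
            rw [hmemV''] at this
            exact this.2.2 rfl
          have hsub : insert v1 B'' ⊆ V := by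
            refine Finset.insert_subset hv1V ?_
            intro x hx
            have := hB''V'' hx
            rw [hmemV''] at this
            exact this.1
          refine ⟨⟨hsub, hsub, ?_, ?_⟩, by
            rw [Finset.mem_insert, not_or]
            exact ⟨hv2ne, hv2nB''⟩⟩
          · intro x hx hxn y hy hyn hxy
            rw [Finset.mem_insert, not_or] at hxn hyn
            by_cases hxv2 : x = v2
            · subst hxv2
              have hyV'' : y ∈ (V.erase v1).erase v2 := by
                rw [hmemV'']
                exact ⟨hy, hyn.1, ne_of_gt hxy⟩
              have hV''ne : ((V.erase v1).erase v2).Nonempty := ⟨y, hyV''⟩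
              set v3 := ((V.erase v1).erase v2).min' hV''ne with hv3def
              have hv3V'' : v3 ∈ (V.erase v1).erase v2 := Finset.min'_mem _ _
              have hv3B'' : v3 ∈ B'' := hmin v3 hv3V'' (fun z hz => Finset.min'_le _ z hz)
              have hv3gt : v2 < v3 := by
                rw [hmemV''] at hv3V''
                exact lt_of_le_of_ne (hv2minV v3 hv3V''.1 hv3V''.2.1) (Ne.symm hv3V''.2.2)
              have hv3lt : v3 < y := lt_of_le_of_ne (Finset.min'_le _ y hyV'')
                (fun h => hyn.2 (h ▸ hv3B''))
              exact ⟨v3, Finset.mem_insert_of_mem hv3B'', hv3gt, hv3lt⟩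
            · have hxV'' : x ∈ (V.erase v1).erase v2 := by
                rw [hmemV'']
                exact ⟨hx, hxn.1, hxv2⟩
              have hyv2 : y ≠ v2 := fun h =>
                absurd hxy (not_lt.mpr (le_trans (le_of_eq h) (hv2minV x hx hxn.1)))
              have hyV'' : y ∈ (V.erase v1).erase v2 := by
                rw [hmemV'']
                exact ⟨hy, hyn.1, hyv2⟩
              obtain ⟨b, hbB, hxb, hby⟩ := hsep x hxV'' hxn.2 y hyV'' hyn.2 hxy
              exact ⟨b, Finset.mem_insert_of_mem hbB, hxb, hby⟩
          · intro x hx hxall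
            have hxv1 : x = v1 := le_antisymm (hxall v1 hv1V) (hv1min x hx)
            subst hxv1
            exact Finset.mem_insert_self _ _
        · intro B hB
          simp only [Finset.mem_filter, Finset.mem_powerset] at hB
          have hv1B : v1 ∈ B := hB.1.2.2.2 v1 hv1V hv1min
          exact Finset.insert_erase hv1B
        · intro B'' hB''
          simp only [Finset.mem_filter, Finset.mem_powerset] at hB''
          have hv1nB'' : v1 ∉ B'' := fun h => by
            have := hB''.1 h
            rw [hmemV''] at this
            exact this.2.1 rfl
          exact Finset.erase_insert hv1nB''
        · intro B hB
          simp only [Finset.mem_filter, Finset.mem_powerset] at hB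
          have hv1B : v1 ∈ B := hB.1.2.2.2 v1 hv1V hv1min
          have hcard : (B.erase v1).card + 1 = B.card := by
            rw [Finset.card_erase_of_mem hv1B]
            have : 0 < B.card := Finset.card_pos.mpr ⟨v1, hv1B⟩
            omega
          rw [hcard]
      rw [← Finset.sum_filter_add_sum_filter_not (V.powerset.filter (IsGood V))
        (fun B => v2 ∈ B) (fun B => f B.card)]
      rw [hA, hB2, ih (m+1) (by omega) (V.erase v1) hV'card (fun k => f (k+1)),
        ih m (by omega) ((V.erase v1).erase v2) hV''card (fun k => f (k+1))]
      exact (NUM2 m f).symm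

namespace NCTmp

variable {α β : Type*} [DecidableEq α] [DecidableEq β]

/-- The partition of `s` into fibers of `f`. -/
def ofFibers (s : Finset α) (f : α → β) : Finpartition s where
  parts := s.image (fun a => s.filter (fun x => f x = f a))
  supIndep := by
    rw [Finset.supIndep_iff_pairwiseDisjoint]
    intro X hX Y hY hXY
    simp only [Finset.coe_image, Set.mem_image, Finset.mem_coe] at hX hY
    obtain ⟨x, hx, rfl⟩ := hX
    obtain ⟨y, hy, rfl⟩ := hY
    refine Finset.disjoint_left.mpr fun z hzx hzy => hXY ?_
    simp only [id, Finset.mem_filter] at hzx hzy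
    have : f x = f y := hzx.2 ▸ hzy.2 ▸ rfl
    simp [this]
  sup_parts := by
    apply le_antisymm
    · refine Finset.sup_le fun t ht => ?_
      simp only [Finset.mem_image] at ht
      obtain ⟨x, hx, rfl⟩ := ht
      exact Finset.filter_subset _ _
    · intro x hx
      rw [Finset.mem_sup]
      exact ⟨s.filter (fun z => f z = f x), Finset.mem_image_of_mem _ hx,
        Finset.mem_filter.mpr ⟨hx, rfl⟩⟩
  bot_notMem := by
    rw [Finset.bot_eq_empty, Finset.mem_image]
    rintro ⟨x, hx, h⟩
    have : x ∈ s.filter (fun z => f z = f x) := Finset.mem_filter.mpr ⟨hx, rfl⟩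
    rw [h] at this
    exact absurd this (Finset.notMem_empty x)

lemma mem_ofFibers {s : Finset α} {f : α → β} {t : Finset α} :
    t ∈ (ofFibers s f).parts ↔ ∃ x ∈ s, t = s.filter (fun z => f z = f x) := by
  simp only [ofFibers, Finset.mem_image]
  constructor
  · rintro ⟨x, hx, rfl⟩; exact ⟨x, hx, rfl⟩
  · rintro ⟨x, hx, rfl⟩; exact ⟨x, hx, rfl⟩

lemma le_ofFibers_iff {s : Finset α} {f : α → β} {τ : Finpartition s} :
    τ ≤ ofFibers s f ↔ ∀ D ∈ τ.parts, ∀ x ∈ D, ∀ y ∈ D, f x = f y := by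
  constructor
  · intro h D hD x hx y hy
    obtain ⟨F, hF, hDF⟩ := h hD
    obtain ⟨z, hz, rfl⟩ := mem_ofFibers.mp hF
    have hx' := Finset.mem_filter.mp (hDF hx)
    have hy' := Finset.mem_filter.mp (hDF hy)
    rw [hx'.2, hy'.2]
  · intro h D hD
    obtain ⟨x, hx⟩ := τ.nonempty_of_mem_parts hD
    have hxs : x ∈ s := τ.le hD hx
    refine ⟨s.filter (fun z => f z = f x), mem_ofFibers.mpr ⟨x, hxs, rfl⟩, fun y hy =>
      Finset.mem_filter.mpr ⟨τ.le hD hy, h D hD y hy x hx⟩⟩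

lemma ofFibers_eq_bot_iff {s : Finset α} {f : α → β} :
    ofFibers s f = ⊥ ↔ ∀ x ∈ s, ∀ y ∈ s, f x = f y → x = y := by
  constructor
  · intro h x hx y hy hf
    have hyF : y ∈ s.filter (fun z => f z = f x) := Finset.mem_filter.mpr ⟨hy, hf.symm⟩
    have hF : s.filter (fun z => f z = f x) ∈ (ofFibers s f).parts :=
      mem_ofFibers.mpr ⟨x, hx, rfl⟩
    rw [h] at hF
    obtain ⟨a, _, ha⟩ := Finpartition.mem_bot_iff.mp hF
    have hxa : x ∈ ({a} : Finset α) := ha ▸ Finset.mem_filter.mpr ⟨hx, rfl⟩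
    have hya : y ∈ ({a} : Finset α) := ha ▸ hyF
    rw [Finset.mem_singleton] at hxa hya
    rw [hxa, hya]
  · intro h
    have hsingle : ∀ x ∈ s, ({x} : Finset α) = s.filter (fun z => f z = f x) := by
      intro x hx
      apply Finset.Subset.antisymm
      · intro z hz
        rw [Finset.mem_singleton] at hz
        subst hz
        exact Finset.mem_filter.mpr ⟨hx, rfl⟩
      · intro z hz
        rw [Finset.mem_filter] at hz
        rw [Finset.mem_singleton]
        exact h z hz.1 x hx hz.2
    ext t
    rw [Finpartition.mem_bot_iff, mem_ofFibers]
    constructor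
    · rintro ⟨x, hx, rfl⟩
      exact ⟨x, hx, hsingle x hx⟩
    · rintro ⟨x, hx, rfl⟩
      exact ⟨x, hx, hsingle x hx⟩

lemma avoid_parts_of_mem {s : Finset α} (τ : Finpartition s) {B : Finset α} (hB : B ∈ τ.parts) :
    (τ.avoid B).parts = τ.parts.erase B := by
  ext t
  rw [Finpartition.mem_avoid, Finset.mem_erase]
  constructor
  · rintro ⟨d, hd, hdB, rfl⟩
    have hdisj : Disjoint d B := τ.disjoint hd hB (fun h => hdB (h ▸ Finset.Subset.refl _))
    rw [Finset.sdiff_eq_self_of_disjoint hdisj]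
    exact ⟨fun h => hdB (h ▸ Finset.Subset.refl _), hd⟩
  · rintro ⟨htB, ht⟩
    have hdisj : Disjoint t B := τ.disjoint ht hB htB
    refine ⟨t, ht, fun h => ?_, Finset.sdiff_eq_self_of_disjoint hdisj⟩
    have ht0 : t = ∅ := Finset.eq_empty_iff_forall_notMem.mpr
      (fun z hz => (Finset.disjoint_left.mp hdisj hz) (h hz))
    exact τ.bot_notMem (by rwa [ht0] at ht)

/-- All parts singletons implies bottom. -/
lemma eq_bot_of_parts_card_one {s : Finset α} (τ : Finpartition s)
    (h : ∀ t ∈ τ.parts, t.card = 1) : τ = ⊥ := by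
  ext t
  rw [Finpartition.mem_bot_iff]
  constructor
  · intro ht
    obtain ⟨b, hb⟩ := Finset.card_eq_one.mp (h t ht)
    exact ⟨b, τ.le ht (hb ▸ Finset.mem_singleton_self b), hb.symm⟩
  · rintro ⟨b, hb, rfl⟩
    obtain ⟨t, ht, hbt⟩ := τ.exists_mem hb
    obtain ⟨c, hc⟩ := Finset.card_eq_one.mp (h t ht)
    rw [hc, Finset.mem_singleton] at hbt
    subst hbt
    rwa [← hc]
    
section Main

variable {n : ℕ}

/-- Noncrossing condition for a partition of an arbitrary subset of `Fin n`. -/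
def IsNC {S : Finset (Fin n)} (π : Finpartition S) : Prop :=
  ∀ a b c d : Fin n, a < b → b < c → c < d →
    ∀ B₁ ∈ π.parts, ∀ B₂ ∈ π.parts, a ∈ B₁ → c ∈ B₁ → b ∈ B₂ → d ∈ B₂ → B₁ = B₂

/-- The weight of a block of size `k`. -/
noncomputable def wF (k : ℕ) : ℝ := (-1:ℝ)^(k-1) * (catalan (k-1) : ℝ)

/-- The weight of a partition. -/
noncomputable def wt {S : Finset (Fin n)} (π : Finpartition S) : ℝ :=
  ∏ V ∈ π.parts, wF V.card

lemma finpartition_empty_eq_bot (τ : Finpartition (∅ : Finset (Fin n))) : τ = ⊥ := by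
  have hparts : τ.parts = ∅ := by
    rw [Finset.eq_empty_iff_forall_notMem]
    intro t ht
    have h1 : t ⊆ ∅ := τ.le ht
    have h2 : t = ∅ := Finset.subset_empty.mp h1
    exact τ.bot_notMem (by rw [Finset.bot_eq_empty]; exact h2 ▸ ht)
  ext t
  rw [hparts]
  simp [Finpartition.mem_bot_iff]

lemma wt_bot_empty : wt (⊥ : Finpartition (∅ : Finset (Fin n))) = 1 := by
  rw [wt]
  have : (⊥ : Finpartition (∅ : Finset (Fin n))).parts = ∅ := by
    simp [Finpartition.parts_bot]
  rw [this, Finset.prod_empty]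

lemma main_empty (P : Finpartition (∅ : Finset (Fin n))) :
    ∑ τ ∈ Finset.univ.filter (fun τ : Finpartition (∅ : Finset (Fin n)) => IsNC τ ∧ τ ≤ P), wt τ
      = if P = ⊥ then 1 else 0 := by
  rw [if_pos (finpartition_empty_eq_bot P)]
  have hfilter : Finset.univ.filter (fun τ : Finpartition (∅ : Finset (Fin n)) => IsNC τ ∧ τ ≤ P)
      = {⊥} := by
    ext τ
    simp only [Finset.mem_filter, Finset.mem_univ, true_and, Finset.mem_singleton]
    constructor
    · intro _; exact finpartition_empty_eq_bot τ
    · rintro rfl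
      constructor
      · intro a b c d _ _ _ B₁ hB₁ B₂ hB₂ _ _ _ _
        exfalso
        have : (⊥ : Finpartition (∅ : Finset (Fin n))).parts = ∅ := by
          simp [Finpartition.parts_bot]
        rw [this] at hB₁
        exact Finset.notMem_empty _ hB₁
      · rw [finpartition_empty_eq_bot P]
  rw [hfilter, Finset.sum_singleton, wt_bot_empty]


/-- The fiber function: records the `P`-block of `x` and the set of elements of `B` below `x`. -/
def fB {S : Finset (Fin n)} (P : Finpartition S) (B : Finset (Fin n)) (x : Fin n) :
    Finset (Fin n) × Finset (Fin n) :=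
  (P.part x, B.filter (fun e => e < x))

/-- The induced partition of `S \ B`. -/
noncomputable def Qp {S : Finset (Fin n)} (P : Finpartition S) (B : Finset (Fin n)) :
    Finpartition (S \ B) :=
  NCTmp.ofFibers (S \ B) (fB P B)

lemma Qp_isNC {S : Finset (Fin n)} (P : Finpartition S) (hP : IsNC P) (B : Finset (Fin n)) :
    IsNC (Qp P B) := by
  intro p1 p2 p3 p4 h12 h23 h34 X hX Y hY hp1 hp3 hp2 hp4
  obtain ⟨x₀, hx₀, rfl⟩ := NCTmp.mem_ofFibers.mp hX
  obtain ⟨y₀, hy₀, rfl⟩ := NCTmp.mem_ofFibers.mp hY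
  rw [Finset.mem_filter] at hp1 hp3 hp2 hp4
  have hp1S : p1 ∈ S := (Finset.mem_sdiff.mp hp1.1).1
  have hp2S : p2 ∈ S := (Finset.mem_sdiff.mp hp2.1).1
  have hp3S : p3 ∈ S := (Finset.mem_sdiff.mp hp3.1).1
  have hp4S : p4 ∈ S := (Finset.mem_sdiff.mp hp4.1).1
  have hp1B : p1 ∉ B := (Finset.mem_sdiff.mp hp1.1).2
  have h13 : fB P B p1 = fB P B p3 := by rw [hp1.2, hp3.2]
  have h24 : fB P B p2 = fB P B p4 := by rw [hp2.2, hp4.2]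
  have hpart13 : P.part p1 = P.part p3 := congrArg Prod.fst h13
  have hpart24 : P.part p2 = P.part p4 := congrArg Prod.fst h24
  have hfil13 : B.filter (fun e => e < p1) = B.filter (fun e => e < p3) := congrArg Prod.snd h13
  have hPpart : P.part p1 = P.part p2 := by
    refine hP p1 p2 p3 p4 h12 h23 h34 (P.part p1) (P.part_mem.mpr hp1S) (P.part p2) (P.part_mem.mpr hp2S)
      (P.mem_part hp1S) ?_ (P.mem_part hp2S) ?_
    · rw [hpart13]; exact P.mem_part hp3S
    · rw [hpart24]; exact P.mem_part hp4S
  have hfil12 : B.filter (fun e => e < p1) = B.filter (fun e => e < p2) := by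
    apply Finset.Subset.antisymm
    · intro e he
      rw [Finset.mem_filter] at he ⊢
      exact ⟨he.1, lt_trans he.2 h12⟩
    · intro e he
      rw [Finset.mem_filter] at he ⊢
      refine ⟨he.1, ?_⟩
      by_contra hlt
      push_neg at hlt
      have he3 : e < p3 := lt_trans he.2 h23
      have : e ∈ B.filter (fun e => e < p3) := Finset.mem_filter.mpr ⟨he.1, he3⟩
      rw [← hfil13, Finset.mem_filter] at this
      exact absurd this.2 (not_lt.mpr hlt)
  have h12' : fB P B p1 = fB P B p2 := by
    rw [fB, fB, hPpart, hfil12]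
  have hxy : fB P B x₀ = fB P B y₀ := by rw [← hp1.2, ← hp2.2]; exact h12'
  apply Finset.filter_congr
  intro z _
  rw [hxy]

lemma filter_subset_of_nc {S : Finset (Fin n)} {τ : Finpartition S} (hτ : IsNC τ)
    (hSne : S.Nonempty) {B D : Finset (Fin n)} (hB : B ∈ τ.parts) (hD : D ∈ τ.parts)
    (hDB : D ≠ B) (haB : S.min' hSne ∈ B) {x y : Fin n} (hx : x ∈ D) (hy : y ∈ D) :
    B.filter (fun e => e < x) ⊆ B.filter (fun e => e < y) := by
  intro e he
  rw [Finset.mem_filter] at he ⊢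
  refine ⟨he.1, ?_⟩
  by_contra hey
  push_neg at hey
  have hynB : y ∉ B := Finset.disjoint_left.mp (τ.disjoint hD hB hDB) hy
  have hye : y < e := lt_of_le_of_ne hey (fun h => hynB (h ▸ he.1))
  have hay : S.min' hSne < y :=
    lt_of_le_of_ne (S.min'_le y (τ.le hD hy)) (fun h => hynB (h ▸ haB))
  exact hDB (hτ (S.min' hSne) y e x hay hye he.2 B hB D hD haB he.1 hy hx).symm

lemma main (N : ℕ) : ∀ (S : Finset (Fin n)), S.card ≤ N → ∀ P : Finpartition S, IsNC P →
    ∑ τ ∈ Finset.univ.filter (fun τ : Finpartition S => IsNC τ ∧ τ ≤ P), wt τ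
      = if P = ⊥ then 1 else 0 := by
  induction N with
  | zero =>
    intro S hS P hP
    have hSe : S = ∅ := Finset.card_eq_zero.mp (Nat.le_zero.mp hS)
    subst hSe
    exact main_empty P
  | succ N ih =>
    intro S hS P hP
    rcases Finset.eq_empty_or_nonempty S with hSe | hSne
    · subst hSe
      exact main_empty P
    -- setup
    set a := S.min' hSne with ha_def
    have haS : a ∈ S := S.min'_mem hSne
    have hamin : ∀ y ∈ S, a ≤ y := fun y hy => S.min'_le y hy
    set V := P.part a with hV_def
    have hVmem : V ∈ P.parts := P.part_mem.mpr haS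
    have haV : a ∈ V := P.mem_part haS
    have hVS : V ⊆ S := P.le hVmem
    -- fiberwise decomposition over the block containing `a`
    have hmaps : ∀ τ ∈ Finset.univ.filter (fun τ : Finpartition S => IsNC τ ∧ τ ≤ P),
        τ.part a ∈ V.powerset.filter (fun B => a ∈ B) := by
      intro τ hτ
      rw [Finset.mem_filter] at hτ
      obtain ⟨-, hNC, hle⟩ := hτ
      rw [Finset.mem_filter, Finset.mem_powerset]
      obtain ⟨Cp, hCp, hsub⟩ := hle (τ.part_mem.mpr haS)
      have hCV : Cp = V := by
        rw [hV_def]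
        exact (P.part_eq_of_mem hCp (hsub (τ.mem_part haS))).symm
      exact ⟨hCV ▸ hsub, τ.mem_part haS⟩
    rw [← Finset.sum_fiberwise_of_maps_to hmaps wt]
    have hinner : ∀ B ∈ V.powerset.filter (fun B => a ∈ B),
        ∑ τ ∈ (Finset.univ.filter (fun τ : Finpartition S => IsNC τ ∧ τ ≤ P)).filter
            (fun τ => τ.part a = B), wt τ
          = wF B.card * (if Qp P B = ⊥ then 1 else 0) := by
      intro B hB
      rw [Finset.mem_filter, Finset.mem_powerset] at hB
      obtain ⟨hBV, haB⟩ := hB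
      have hBS : B ⊆ S := hBV.trans hVS
      have hBne : B.Nonempty := ⟨a, haB⟩
      have hBbot : B ≠ ⊥ := by
        rw [Finset.bot_eq_empty]; exact Finset.nonempty_iff_ne_empty.mp hBne
      have hcup : (S \ B) ⊔ B = S := by
        rw [Finset.sup_eq_union]; exact Finset.sdiff_union_of_subset hBS
      have hcard : (S \ B).card ≤ N := by
        have h1 : (S \ B).card = S.card - B.card := Finset.card_sdiff_of_subset hBS
        have h2 : 0 < B.card := Finset.card_pos.mpr hBne
        omega
      rw [← ih (S \ B) hcard (Qp P B) (Qp_isNC P hP B), Finset.mul_sum]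
      refine Finset.sum_nbij' (fun τ => τ.avoid B)
        (fun τ' => τ'.extend hBbot Finset.sdiff_disjoint hcup) ?_ ?_ ?_ ?_ ?_
      · -- forward map lands in target
        intro τ hτ
        rw [Finset.mem_filter] at hτ
        obtain ⟨hτ', hpart⟩ := hτ
        rw [Finset.mem_filter] at hτ'
        obtain ⟨-, hNC, hle⟩ := hτ'
        have hBmem : B ∈ τ.parts := hpart ▸ τ.part_mem.mpr haS
        have hparts_eq : (τ.avoid B).parts = τ.parts.erase B := NCTmp.avoid_parts_of_mem τ hBmem
        rw [Finset.mem_filter]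
        refine ⟨Finset.mem_univ _, ?_, ?_⟩
        · -- noncrossing
          intro p1 p2 p3 p4 h12 h23 h34 X hX Y hY hp1 hp3 hp2 hp4
          rw [hparts_eq] at hX hY
          exact hNC p1 p2 p3 p4 h12 h23 h34 X (Finset.mem_of_mem_erase hX)
            Y (Finset.mem_of_mem_erase hY) hp1 hp3 hp2 hp4
        · -- ≤ Qp P B
          rw [Qp, NCTmp.le_ofFibers_iff]
          intro D hD x hx y hy
          rw [hparts_eq, Finset.mem_erase] at hD
          obtain ⟨hDB, hDmem⟩ := hD
          obtain ⟨Cp, hCp, hsub⟩ := hle hDmem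
          have hpartxy : P.part x = P.part y := by
            rw [P.part_eq_of_mem hCp (hsub hx), P.part_eq_of_mem hCp (hsub hy)]
          have hfil : B.filter (fun e => e < x) = B.filter (fun e => e < y) :=
            Finset.Subset.antisymm
              (filter_subset_of_nc hNC hSne hBmem hDmem hDB (hpart ▸ haB) hx hy)
              (filter_subset_of_nc hNC hSne hBmem hDmem hDB (hpart ▸ haB) hy hx)
          rw [fB, fB, hpartxy, hfil]
      · -- backward map lands in source
        intro τ' hτ'
        rw [Finset.mem_filter] at hτ'
        obtain ⟨-, hNC', hle'⟩ := hτ'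
        have hfib : ∀ D ∈ τ'.parts, ∀ x ∈ D, ∀ y ∈ D, fB P B x = fB P B y :=
          NCTmp.le_ofFibers_iff.mp hle'
        have hparts : (τ'.extend hBbot Finset.sdiff_disjoint hcup).parts = insert B τ'.parts :=
          Finpartition.extend_parts _ _ _ _
        have hDsub : ∀ D ∈ τ'.parts, D ⊆ S \ B := fun D hD => τ'.le hD
        -- blocks of τ' don't straddle B
        have hnostraddle : ∀ D ∈ τ'.parts, ∀ x ∈ D, ∀ y ∈ D, ∀ e ∈ B, x < e → e < y → False := by
          intro D hD x hx y hy e heB hxe hey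
          have h := congrArg Prod.snd (hfib D hD x hx y hy)
          simp only [fB] at h
          have : e ∈ B.filter (fun e' => e' < y) := Finset.mem_filter.mpr ⟨heB, hey⟩
          rw [← h, Finset.mem_filter] at this
          exact absurd this.2 (not_lt.mpr (le_of_lt hxe))
        rw [Finset.mem_filter, Finset.mem_filter]
        refine ⟨⟨Finset.mem_univ _, ?_, ?_⟩, ?_⟩
        · -- noncrossing of the extension
          intro p1 p2 p3 p4 h12 h23 h34 X hX Y hY hp1 hp3 hp2 hp4
          rw [hparts, Finset.mem_insert] at hX hY
          rcases hX with rfl | hX <;> rcases hY with rfl | hY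
          · rfl
          · exact absurd (hnostraddle Y hY p2 hp2 p4 hp4 p3 hp3 h23 h34) id
          · exact absurd (hnostraddle X hX p1 hp1 p3 hp3 p2 hp2 h12 h23) id
          · exact hNC' p1 p2 p3 p4 h12 h23 h34 X hX Y hY hp1 hp3 hp2 hp4
        · -- ≤ P
          intro D hD
          rw [hparts, Finset.mem_insert] at hD
          rcases hD with rfl | hD
          · exact ⟨V, hVmem, hBV⟩
          · obtain ⟨F, hF, hDF⟩ := hle' hD
            obtain ⟨x₀, hx₀, rfl⟩ := NCTmp.mem_ofFibers.mp hF
            have hx₀S : x₀ ∈ S := (Finset.mem_sdiff.mp hx₀).1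
            refine ⟨P.part x₀, P.part_mem.mpr hx₀S, fun z hz => ?_⟩
            have hz' := Finset.mem_filter.mp (hDF hz)
            have hzS : z ∈ S := (Finset.mem_sdiff.mp hz'.1).1
            have : P.part z = P.part x₀ := congrArg Prod.fst hz'.2
            exact this ▸ P.mem_part hzS
        · -- the block of a is B
          refine Finpartition.part_eq_of_mem _ ?_ haB
          rw [hparts]
          exact Finset.mem_insert_self _ _
      · -- left inverse
        intro τ hτ
        rw [Finset.mem_filter] at hτ
        have hBmem : B ∈ τ.parts := hτ.2 ▸ τ.part_mem.mpr haS
        ext1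
        rw [Finpartition.extend_parts, NCTmp.avoid_parts_of_mem τ hBmem,
          Finset.insert_erase hBmem]
      · -- right inverse
        intro τ' hτ'
        have hBnot : B ∉ τ'.parts := by
          intro h
          have := τ'.le h haB
          rw [Finset.mem_sdiff] at this
          exact this.2 haB
        have hBmem' : B ∈ (τ'.extend hBbot Finset.sdiff_disjoint hcup).parts := by
          rw [Finpartition.extend_parts]
          exact Finset.mem_insert_self _ _
        ext1
        rw [NCTmp.avoid_parts_of_mem _ hBmem', Finpartition.extend_parts,
          Finset.erase_insert hBnot]
      · -- weights
        intro τ hτ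
        rw [Finset.mem_filter] at hτ
        have hBmem : B ∈ τ.parts := hτ.2 ▸ τ.part_mem.mpr haS
        rw [wt, wt, NCTmp.avoid_parts_of_mem τ hBmem,
          ← Finset.mul_prod_erase τ.parts _ hBmem]
    rw [Finset.sum_congr rfl hinner]
    -- now evaluate the sum over candidate blocks B
    by_cases hPbot : P = ⊥
    · -- P = ⊥ : only B = {a} contributes
      rw [if_pos hPbot]
      have hVa : V = {a} := by
        rw [hV_def, hPbot]
        exact Finpartition.part_eq_of_mem _
          (Finpartition.mem_bot_iff.mpr ⟨a, haS, rfl⟩) (Finset.mem_singleton_self a)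
      have hcands : V.powerset.filter (fun B => a ∈ B) = {({a} : Finset (Fin n))} := by
        ext B
        rw [Finset.mem_filter, Finset.mem_powerset, Finset.mem_singleton, hVa]
        constructor
        · rintro ⟨hsub, hmem⟩
          exact Finset.Subset.antisymm hsub (Finset.singleton_subset_iff.mpr hmem)
        · rintro rfl
          exact ⟨Finset.Subset.refl _, Finset.mem_singleton_self a⟩
      rw [hcands, Finset.sum_singleton]
      have hQbot : Qp P {a} = ⊥ := by
        rw [Qp, NCTmp.ofFibers_eq_bot_iff]
        intro x hx y hy hf
        have hxS : x ∈ S := (Finset.mem_sdiff.mp hx).1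
        have hyS : y ∈ S := (Finset.mem_sdiff.mp hy).1
        have hpart : P.part x = P.part y := congrArg Prod.fst hf
        have hxx : P.part x = {x} := by
          rw [hPbot]
          exact Finpartition.part_eq_of_mem _
            (Finpartition.mem_bot_iff.mpr ⟨x, hxS, rfl⟩) (Finset.mem_singleton_self x)
        have hyy : P.part y = {y} := by
          rw [hPbot]
          exact Finpartition.part_eq_of_mem _
            (Finpartition.mem_bot_iff.mpr ⟨y, hyS, rfl⟩) (Finset.mem_singleton_self y)
        rw [hxx, hyy] at hpart
        exact Finset.singleton_injective hpart
      rw [if_pos hQbot]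
      simp [wF]
    · -- P ≠ ⊥
      rw [if_neg hPbot]
      by_cases hbig : ∃ W ∈ P.parts, W ≠ V ∧ 2 ≤ W.card
      · -- some other block has size ≥ 2: all quotients are nontrivial
        obtain ⟨W, hW, hWV, hW2⟩ := hbig
        apply Finset.sum_eq_zero
        intro B hB
        rw [Finset.mem_filter, Finset.mem_powerset] at hB
        obtain ⟨hBV, haB⟩ := hB
        have hWS : W ⊆ S := P.le hW
        have hBdisjW : ∀ z ∈ W, z ∉ B := by
          intro z hz hzB
          exact hWV (P.eq_of_mem_parts hW hVmem hz (hBV hzB))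
        have key : ∀ u v : Fin n, u ∈ W → v ∈ W → u < v → Qp P B ≠ ⊥ := by
          intro u v hu hv huv hQbot
          have huSB : u ∈ S \ B := Finset.mem_sdiff.mpr ⟨hWS hu, hBdisjW u hu⟩
          have hvSB : v ∈ S \ B := Finset.mem_sdiff.mpr ⟨hWS hv, hBdisjW v hv⟩
          have hpart : P.part u = P.part v := by
            rw [P.part_eq_of_mem hW hu, P.part_eq_of_mem hW hv]
          have hfil : B.filter (fun e => e < u) = B.filter (fun e => e < v) := by
            apply Finset.Subset.antisymm
            · intro e he; rw [Finset.mem_filter] at he ⊢; exact ⟨he.1, lt_trans he.2 huv⟩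
            · intro e he
              rw [Finset.mem_filter] at he ⊢
              refine ⟨he.1, ?_⟩
              by_contra heu
              push_neg at heu
              have hue : u < e := lt_of_le_of_ne heu (fun h => (hBdisjW u hu) (h ▸ he.1))
              have hau : a < u := lt_of_le_of_ne (hamin u (hWS hu))
                (fun h => hWV (P.eq_of_mem_parts hW hVmem (h ▸ hu) haV))
              exact hWV (hP a u e v hau hue he.2 V hVmem W hW haV (hBV he.1) hu hv).symm
          have hf : fB P B u = fB P B v := by rw [fB, fB, hpart, hfil]
          have := (NCTmp.ofFibers_eq_bot_iff.mp hQbot) u huSB v hvSB hf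
          exact absurd this (ne_of_lt huv)
        obtain ⟨u, v, hu, hv, huv⟩ := Finset.one_lt_card_iff.mp hW2
        have hQne : Qp P B ≠ ⊥ := by
          rcases lt_or_gt_of_ne huv with hlt | hgt
          · exact key u v hu hv hlt
          · exact key v u hv hu hgt
        rw [if_neg hQne, mul_zero]
      · push_neg at hbig
        have hsingle : ∀ W ∈ P.parts, W ≠ V → W.card = 1 := by
          intro W hW hWV
          have h2 := hbig W hW hWV
          have h1 : 0 < W.card := Finset.card_pos.mpr (P.nonempty_of_mem_parts hW)
          omega
        have hV2 : 2 ≤ V.card := by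
          by_contra hV2
          push_neg at hV2
          apply hPbot
          apply NCTmp.eq_bot_of_parts_card_one
          intro t ht
          by_cases htV : t = V
          · rw [htV]
            have : 0 < V.card := Finset.card_pos.mpr ⟨a, haV⟩
            omega
          · exact hsingle t ht htV
        have hQiff : ∀ B, B ⊆ V → a ∈ B → (Qp P B = ⊥ ↔ IsGood V B) := by
          intro B hBV haB
          constructor
          · intro hQbot
            refine ⟨hBV, ?_, ?_⟩
            · intro x hxV hxB y hyV hyB hxy
              by_contra hnone
              push_neg at hnone
              have hxS : x ∈ S \ B := Finset.mem_sdiff.mpr ⟨hVS hxV, hxB⟩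
              have hyS : y ∈ S \ B := Finset.mem_sdiff.mpr ⟨hVS hyV, hyB⟩
              have hpart : P.part x = P.part y := by
                rw [P.part_eq_of_mem hVmem hxV, P.part_eq_of_mem hVmem hyV]
              have hfil : B.filter (fun e => e < x) = B.filter (fun e => e < y) := by
                apply Finset.Subset.antisymm
                · intro e he; rw [Finset.mem_filter] at he ⊢; exact ⟨he.1, lt_trans he.2 hxy⟩
                · intro e he
                  rw [Finset.mem_filter] at he ⊢
                  refine ⟨he.1, ?_⟩
                  by_contra hex
                  push_neg at hex
                  have hxe : x < e := lt_of_le_of_ne hex (fun h => hxB (h ▸ he.1))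
                  exact absurd he.2 (not_lt.mpr (hnone e he.1 hxe))
              have := NCTmp.ofFibers_eq_bot_iff.mp hQbot x hxS y hyS
                (by rw [fB, fB, hpart, hfil])
              exact absurd this (ne_of_lt hxy)
            · intro x hxV hxall
              have hxa : x = a := le_antisymm (hxall a haV) (hamin x (hVS hxV))
              exact hxa ▸ haB
          · intro hgood
            rw [Qp, NCTmp.ofFibers_eq_bot_iff]
            have aux : ∀ x y : Fin n, x ∈ S \ B → y ∈ S \ B →
                fB P B x = fB P B y → x < y → False := by
              intro x y hx hy hf hxy
              rw [Finset.mem_sdiff] at hx hy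
              have hpart : P.part x = P.part y := congrArg Prod.fst hf
              by_cases hCV : P.part x = V
              · have hxV : x ∈ V := hCV ▸ P.mem_part hx.1
                have hyV : y ∈ V := by
                  have hyV' : P.part y = V := hpart ▸ hCV
                  exact hyV' ▸ P.mem_part hy.1
                obtain ⟨b, hbB, hxb, hby⟩ := hgood.2.1 x hxV hx.2 y hyV hy.2 hxy
                have hfil : B.filter (fun e => e < x) = B.filter (fun e => e < y) :=
                  congrArg Prod.snd hf
                have hbmem : b ∈ B.filter (fun e => e < y) := Finset.mem_filter.mpr ⟨hbB, hby⟩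
                rw [← hfil, Finset.mem_filter] at hbmem
                exact absurd hbmem.2 (not_lt.mpr (le_of_lt hxb))
              · have hcard1 : (P.part x).card = 1 := hsingle _ (P.part_mem.mpr hx.1) hCV
                obtain ⟨c, hc⟩ := Finset.card_eq_one.mp hcard1
                have hxc : x = c := by
                  have := P.mem_part hx.1
                  rwa [hc, Finset.mem_singleton] at this
                have hyc : y = c := by
                  have := P.mem_part hy.1
                  rw [← hpart, hc] at this
                  rwa [Finset.mem_singleton] at this
                exact absurd (hxc.trans hyc.symm) (ne_of_lt hxy)
            intro x hx y hy hf
            rcases lt_trichotomy x y with h | h | h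
            · exact (aux x y hx hy hf h).elim
            · exact h
            · exact (aux y x hy hx hf.symm h).elim
        have hterm : ∀ B ∈ V.powerset.filter (fun B => a ∈ B),
            wF B.card * (if Qp P B = ⊥ then 1 else 0)
              = if IsGood V B then wF B.card else 0 := by
          intro B hB
          rw [Finset.mem_filter, Finset.mem_powerset] at hB
          simp only [hQiff B hB.1 hB.2]
          split_ifs <;> ring
        rw [Finset.sum_congr rfl hterm]
        have hgood_mem : ∀ B ∈ V.powerset, IsGood V B → a ∈ B := by
          intro B hB hgood
          exact hgood.2.2 a haV (fun y hy => hamin y (hVS hy))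
        have hsum2 : ∑ B ∈ V.powerset.filter (fun B => a ∈ B),
              (if IsGood V B then wF B.card else 0)
            = ∑ B ∈ V.powerset.filter (IsGood V), wF B.card := by
          rw [Finset.sum_filter, Finset.sum_filter]
          refine Finset.sum_congr rfl fun B hB => ?_
          by_cases hg : IsGood V B
          · simp [hg, hgood_mem B hB hg]
          · simp [hg]
        rw [hsum2, SUMG V.card V rfl wF]
        obtain ⟨M, hM⟩ : ∃ M, V.card = M + 2 := ⟨V.card - 2, by omega⟩
        rw [hM]
        have h23 : M + 2 + 1 = M + 3 := by omega
        rw [h23]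
        have hz := NUM1 M
        have hzr : ∑ k ∈ Finset.range (M+3),
            ((k.choose (M+2-k) : ℝ)) * ((-1:ℝ)^(k-1) * (catalan (k-1) : ℝ)) = 0 := by
          exact_mod_cast hz
        rw [← hzr]
        refine Finset.sum_congr rfl fun k _ => ?_
        rw [wF]

lemma wt_eq (π : Finpartition (Finset.univ : Finset (Fin n))) :
    wt π = (-1:ℝ)^(n - π.parts.card) * ∏ V ∈ π.parts, (catalan (V.card - 1) : ℝ) := by
  rw [wt]
  have hwf : ∀ V ∈ π.parts, wF V.card = (-1:ℝ)^(V.card - 1) * (catalan (V.card - 1) : ℝ) :=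
    fun _ _ => rfl
  rw [Finset.prod_congr rfl hwf, Finset.prod_mul_distrib]
  congr 1
  rw [Finset.prod_pow_eq_pow_sum]
  congr 1
  have hsum : ∑ V ∈ π.parts, V.card = n := by
    rw [π.sum_card_parts, Finset.card_univ, Fintype.card_fin]
  have hone : ∀ V ∈ π.parts, 1 ≤ V.card := fun V hV =>
    Finset.card_pos.mpr (π.nonempty_of_mem_parts hV)
  have h2 : (∑ V ∈ π.parts, (V.card - 1)) + π.parts.card = ∑ V ∈ π.parts, V.card := by
    rw [Finset.card_eq_sum_ones, ← Finset.sum_add_distrib]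
    refine Finset.sum_congr rfl fun V hV => ?_
    have := hone V hV
    omega
  omega

end Main
end NCTmp

open Finset

open scoped Classical in
/-- The Möbius function of the non-crossing partition lattice `NC(n)` (non-crossing
partitions of `{1,…,n}` under reverse refinement, with minimum `0_n = ⊥` the
all-singletons partition), defined by `∑_{σ ∈ NC(n), σ ≤ π} Möb_NC(0_n, σ) = [π = 0_n]`,
satisfies `Möb_NC(0_n, π) = (−1)^{n−|π|} ∏_{V ∈ π} C_{|V|−1}` where
`C_k = (1/(k+1))·C(2k,k)` is the `k`-th Catalan number. -/
theorem moebius_noncrossing_partition_lattice (n : ℕ)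
    (mu : Finpartition (Finset.univ : Finset (Fin n)) → ℝ)
    (hmu : ∀ π : Finpartition (Finset.univ : Finset (Fin n)), π.IsNonCrossing →
      ∑ σ ∈ Finset.univ.filter (fun σ => Finpartition.IsNonCrossing σ ∧ σ ≤ π), mu σ
        = if π = ⊥ then 1 else 0) :
    ∀ π : Finpartition (Finset.univ : Finset (Fin n)), π.IsNonCrossing →
      mu π = (-1 : ℝ) ^ (n - π.parts.card) *
        ∏ V ∈ π.parts, (catalan (V.card - 1) : ℝ) := by
  have hNCeq : ∀ π : Finpartition (Finset.univ : Finset (Fin n)),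
      Finpartition.IsNonCrossing π = NCTmp.IsNC π := fun π => rfl
  have hkey : ∀ π : Finpartition (Finset.univ : Finset (Fin n)), π.IsNonCrossing →
      ∑ σ ∈ Finset.univ.filter
        (fun σ : Finpartition (Finset.univ : Finset (Fin n)) =>
          Finpartition.IsNonCrossing σ ∧ σ ≤ π), NCTmp.wt σ
        = if π = ⊥ then 1 else 0 := by
    intro π hπ
    have := NCTmp.main (Finset.univ : Finset (Fin n)).card (Finset.univ : Finset (Fin n))
      le_rfl π (by rw [← hNCeq]; exact hπ)
    simpa only [hNCeq] using this
  suffices h : ∀ (k : ℕ) (π : Finpartition (Finset.univ : Finset (Fin n))), π.IsNonCrossing →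
      (Finset.univ.filter (fun σ : Finpartition (Finset.univ : Finset (Fin n)) =>
        Finpartition.IsNonCrossing σ ∧ σ ≤ π)).card ≤ k →
      mu π = NCTmp.wt π by
    intro π hπ
    rw [h _ π hπ le_rfl, NCTmp.wt_eq]
  intro k
  induction k with
  | zero =>
    intro π hπ hcard
    exfalso
    have hmem : π ∈ Finset.univ.filter (fun σ : Finpartition (Finset.univ : Finset (Fin n)) =>
        Finpartition.IsNonCrossing σ ∧ σ ≤ π) :=
      Finset.mem_filter.mpr ⟨Finset.mem_univ _, hπ, le_refl _⟩
    have := Finset.card_pos.mpr ⟨π, hmem⟩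
    omega
  | succ k ihk =>
    intro π hπ hcard
    have h1 := hmu π hπ
    have h2 := hkey π hπ
    have hmem : π ∈ Finset.univ.filter (fun σ : Finpartition (Finset.univ : Finset (Fin n)) =>
        Finpartition.IsNonCrossing σ ∧ σ ≤ π) :=
      Finset.mem_filter.mpr ⟨Finset.mem_univ _, hπ, le_refl _⟩
    have h3 : ∑ σ ∈ Finset.univ.filter
        (fun σ : Finpartition (Finset.univ : Finset (Fin n)) =>
          Finpartition.IsNonCrossing σ ∧ σ ≤ π), (mu σ - NCTmp.wt σ) = 0 := by
      rw [Finset.sum_sub_distrib, h1, h2, sub_self]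
    have hzero : ∀ σ ∈ Finset.univ.filter
        (fun σ : Finpartition (Finset.univ : Finset (Fin n)) =>
          Finpartition.IsNonCrossing σ ∧ σ ≤ π), σ ≠ π → mu σ - NCTmp.wt σ = 0 := by
      intro σ hσ hne
      rw [Finset.mem_filter] at hσ
      obtain ⟨-, hσNC, hσle⟩ := hσ
      have hsubset : Finset.univ.filter
          (fun ρ : Finpartition (Finset.univ : Finset (Fin n)) =>
            Finpartition.IsNonCrossing ρ ∧ ρ ≤ σ)
          ⊆ (Finset.univ.filter (fun ρ : Finpartition (Finset.univ : Finset (Fin n)) =>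
            Finpartition.IsNonCrossing ρ ∧ ρ ≤ π)).erase π := by
        intro ρ hρ
        rw [Finset.mem_filter] at hρ
        obtain ⟨-, hρNC, hρle⟩ := hρ
        rw [Finset.mem_erase, Finset.mem_filter]
        refine ⟨?_, Finset.mem_univ _, hρNC, le_trans hρle hσle⟩
        rintro rfl
        exact hne (le_antisymm hσle hρle)
      have hc1 := Finset.card_le_card hsubset
      have hc2 := Finset.card_erase_of_mem hmem
      have : mu σ = NCTmp.wt σ := ihk σ hσNC (by omega)
      rw [this, sub_self]
    have h4 := Finset.sum_eq_single_of_mem π hmem hzero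
    rw [h3] at h4
    have : mu π - NCTmp.wt π = 0 := h4.symm
    linarith
end
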